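/- arXiv:2012.10510 — 6 statements merged into one kernel-verified Lean document; each statement's English description precedes it below -/
import Mathlib

section
/- Let G₂ = ⟨g₁, g₂ ∣ g₂g₁ = g₁^{-1}g₂⟩. A map ψ : G₂ → G₂ is an automorphism of G₂ if and only if there exist a ∈ ℤ and ε, η ∈ {1, -1} such that ψ(g₁) = g₁^{ε} and ψ(g₂) = g₁^{a} · g₂^{η}. In particular, every automorphism of G₂ is of one of the four forms α_a (ψ(g₁)=g₁, ψ(g₂)=g₁^a g₂^{-1}), β_a (ψ(g₁)=g₁^{-1}, ψ(g₂)=g₁^a g₂), γ_a (ψ(g₁)=g₁, ψ(g₂)=g₁^a g₂), δ_a (ψ(g₁)=g₁^{-1}, ψ(g₂)=g₁^a g₂^{-1}) for some a ∈ ℤ. -/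
/-- The single relator `g₂ g₁ g₂⁻¹ g₁` presenting the Klein bottle group
`⟨g₁, g₂ ∣ g₂ g₁ = g₁⁻¹ g₂⟩`. -/
def kleinRels : Set (FreeGroup (Fin 2)) :=
  {FreeGroup.of 1 * FreeGroup.of 0 * (FreeGroup.of 1)⁻¹ * FreeGroup.of 0}

namespace Klein

abbrev G₂ := PresentedGroup kleinRels
def g₁ : G₂ := PresentedGroup.of 0
def g₂ : G₂ := PresentedGroup.of 1

lemma rel : g₂ * g₁ * g₂⁻¹ * g₁ = 1 := by
  have h : (FreeGroup.of 1 * FreeGroup.of 0 * (FreeGroup.of 1)⁻¹ * FreeGroup.of 0) ∈ kleinRels := rfl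
  have := (QuotientGroup.eq_one_iff (G := FreeGroup (Fin 2))
    (N := Subgroup.normalClosure kleinRels)
    (FreeGroup.of 1 * FreeGroup.of 0 * (FreeGroup.of 1)⁻¹ * FreeGroup.of 0)).mpr
    (Subgroup.subset_normalClosure h)
  exact this

lemma conj1 : g₂ * g₁ * g₂⁻¹ = g₁⁻¹ := by
  have h := rel
  rwa [mul_eq_one_iff_eq_inv] at h

lemma conj_zpow' (m : ℤ) : g₂ * g₁ ^ m * g₂⁻¹ = g₁ ^ (-m) := by
  rw [← conj_zpow, conj1, inv_zpow, zpow_neg]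

lemma conj_zpow'' (m : ℤ) : g₂⁻¹ * g₁ ^ m * g₂ = g₁ ^ (-m) := by
  have h := conj_zpow' (-m)
  have : g₁ ^ m = g₂ * g₁ ^ (-m) * g₂⁻¹ := by rw [h, neg_neg]
  rw [this]; group

lemma swap_pow (n m : ℤ) : g₂ ^ n * g₁ ^ m = g₁ ^ ((n.negOnePow : ℤ) * m) * g₂ ^ n := by
  induction n using Int.induction_on with
  | zero => simp
  | succ k ih =>
      have h1 : g₂ ^ ((k : ℤ) + 1) = g₂ * g₂ ^ (k : ℤ) := by
        rw [add_comm, zpow_add, zpow_one]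
      have h2 : (((k : ℤ) + 1).negOnePow : ℤ) = -((k : ℤ).negOnePow : ℤ) := by
        simp [Int.negOnePow_succ]
      calc g₂ ^ ((k : ℤ) + 1) * g₁ ^ m = g₂ * (g₂ ^ (k : ℤ) * g₁ ^ m) := by
            rw [h1, mul_assoc]
        _ = (g₂ * g₁ ^ (((k : ℤ).negOnePow : ℤ) * m) * g₂⁻¹) * (g₂ * g₂ ^ (k : ℤ)) := by
            rw [ih]; group
        _ = g₁ ^ ((((k : ℤ) + 1).negOnePow : ℤ) * m) * g₂ ^ ((k : ℤ) + 1) := by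
            rw [conj_zpow', h1, h2, neg_mul]
  | pred k ih =>
      have h1 : g₂ ^ (-(k : ℤ) - 1) = g₂⁻¹ * g₂ ^ (-(k : ℤ)) := by
        rw [sub_eq_add_neg, add_comm, zpow_add, zpow_neg_one]
      have h2 : ((-(k : ℤ) - 1).negOnePow : ℤ) = -((-(k : ℤ)).negOnePow : ℤ) := by
        rw [sub_eq_add_neg, add_comm, Int.negOnePow_add]
        simp
      calc g₂ ^ (-(k : ℤ) - 1) * g₁ ^ m = g₂⁻¹ * (g₂ ^ (-(k : ℤ)) * g₁ ^ m) := by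
            rw [h1, mul_assoc]
        _ = (g₂⁻¹ * g₁ ^ (((-(k : ℤ)).negOnePow : ℤ) * m) * g₂) * (g₂⁻¹ * g₂ ^ (-(k : ℤ))) := by
            rw [ih]; group
        _ = g₁ ^ (((-(k : ℤ) - 1).negOnePow : ℤ) * m) * g₂ ^ (-(k : ℤ) - 1) := by
            rw [conj_zpow'', h1, h2, neg_mul]

/-- Concrete model of the Klein bottle group: ℤ ⋊ ℤ, `(m,n)` ↔ `g₁^m g₂^n`. -/
@[ext] structure K where
  m : ℤ
  n : ℤ

namespace K

instance : Mul K := ⟨fun a b => ⟨a.m + (a.n.negOnePow : ℤ) * b.m, a.n + b.n⟩⟩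
instance : One K := ⟨⟨0, 0⟩⟩
instance : Inv K := ⟨fun a => ⟨-((a.n.negOnePow : ℤ) * a.m), -a.n⟩⟩

lemma mul_def (a b : K) : a * b = ⟨a.m + (a.n.negOnePow : ℤ) * b.m, a.n + b.n⟩ := rfl
lemma one_def : (1 : K) = ⟨0, 0⟩ := rfl
lemma inv_def (a : K) : a⁻¹ = ⟨-((a.n.negOnePow : ℤ) * a.m), -a.n⟩ := rfl

instance : Group K where
  mul_assoc a b c := by
    simp only [mul_def, Int.negOnePow_add, Units.val_mul]
    ext <;> ring
  one_mul a := by simp [mul_def, one_def]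
  mul_one a := by simp [mul_def, one_def]
  inv_mul_cancel a := by
    simp only [mul_def, inv_def, one_def, Int.negOnePow_neg]
    ext <;> simp [← mul_assoc, ← Units.val_mul]

end K

open K in
/-- The map to the concrete model. -/
def toK : G₂ →* K :=
  PresentedGroup.toGroup (f := ![(⟨1, 0⟩ : K), ⟨0, 1⟩])
    (by
      intro r hr
      rw [Set.mem_singleton_iff.mp hr]
      simp only [map_mul, map_inv, FreeGroup.lift_apply_of, Matrix.cons_val_zero,
        Matrix.cons_val_one, Matrix.head_cons]
      ext <;>
        simp [K.mul_def, K.inv_def, K.one_def, Int.negOnePow_one, Int.negOnePow_zero])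

@[simp] lemma toK_g₁ : toK g₁ = ⟨1, 0⟩ := PresentedGroup.toGroup.of _
@[simp] lemma toK_g₂ : toK g₂ = ⟨0, 1⟩ := PresentedGroup.toGroup.of _

lemma K_zpow_left (m : ℤ) : (⟨1, 0⟩ : K) ^ m = ⟨m, 0⟩ := by
  induction m using Int.induction_on with
  | zero => rfl
  | succ k ih =>
      rw [zpow_add_one, ih]
      ext <;> simp [K.mul_def, Int.negOnePow_zero] <;> omega
  | pred k ih =>
      rw [zpow_sub_one, ih]
      ext <;> simp [K.mul_def, K.inv_def, Int.negOnePow_zero] <;> omega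

lemma K_zpow_right (n : ℤ) : (⟨0, 1⟩ : K) ^ n = ⟨0, n⟩ := by
  induction n using Int.induction_on with
  | zero => rfl
  | succ k ih =>
      rw [zpow_add_one, ih]
      ext <;> simp [K.mul_def, Int.negOnePow_one] <;> omega
  | pred k ih =>
      rw [zpow_sub_one, ih]
      ext <;> simp [K.mul_def, K.inv_def, Int.negOnePow_one] <;> omega

lemma toK_form (m n : ℤ) : toK (g₁ ^ m * g₂ ^ n) = ⟨m, n⟩ := by
  rw [map_mul, map_zpow, map_zpow, toK_g₁, toK_g₂, K_zpow_left, K_zpow_right]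
  ext <;> simp [K.mul_def, Int.negOnePow_zero]

/-- The inverse map from the concrete model. -/
def fromK : K →* G₂ where
  toFun a := g₁ ^ a.m * g₂ ^ a.n
  map_one' := by simp [K.one_def]
  map_mul' a b := by
    simp only [K.mul_def]
    conv_rhs => rw [mul_assoc, ← mul_assoc (g₂ ^ a.n), swap_pow a.n b.m]
    rw [zpow_add, zpow_add]
    group

@[simp] lemma fromK_mk (m n : ℤ) : fromK ⟨m, n⟩ = g₁ ^ m * g₂ ^ n := rfl

lemma fromK_toK (g : G₂) : fromK (toK g) = g := by
  have h : fromK.comp toK = MonoidHom.id G₂ := by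
    apply PresentedGroup.ext
    intro x
    fin_cases x
    · show fromK (toK g₁) = g₁
      rw [toK_g₁, fromK_mk]; simp
    · show fromK (toK g₂) = g₂
      rw [toK_g₂, fromK_mk]; simp
  exact DFunLike.congr_fun h g

lemma exists_form (g : G₂) : ∃ m n : ℤ, g = g₁ ^ m * g₂ ^ n := by
  refine ⟨(toK g).m, (toK g).n, ?_⟩
  conv_lhs => rw [← fromK_toK g]
  rfl

lemma form_eq_one_iff (m n : ℤ) : g₁ ^ m * g₂ ^ n = 1 ↔ m = 0 ∧ n = 0 := by
  constructor
  · intro h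
    have h2 := congrArg toK h
    rw [toK_form, map_one] at h2
    exact ⟨congrArg K.m h2, congrArg K.n h2⟩
  · rintro ⟨rfl, rfl⟩; simp

lemma n_zpow (x : K) (k : ℤ) : (x ^ k).n = k * x.n := by
  induction k using Int.induction_on with
  | zero => simp [K.one_def]
  | succ j ih => rw [zpow_add_one]; show (x ^ (j:ℤ)).n + x.n = _; rw [ih]; ring
  | pred j ih =>
      rw [zpow_sub_one]; show (x ^ (-(j:ℤ))).n + (-x.n) = _; rw [ih]; ring

lemma negOnePow_sq (b : ℤ) : (b.negOnePow : ℤ) * (b.negOnePow : ℤ) = 1 := by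
  rw [← Units.val_mul, Int.units_mul_self, Units.val_one]

lemma rel_n {A B : K} (h : A * B * A⁻¹ * B = 1) : B.n = 0 := by
  have hn := congrArg K.n h
  simp only [K.mul_def, K.inv_def, K.one_def] at hn
  omega

lemma rel_m {A : K} {s : ℤ} (h : A * ⟨s, 0⟩ * A⁻¹ * ⟨s, 0⟩ = 1) :
    ((A.n.negOnePow : ℤ) + 1) * s = 0 := by
  have hm := congrArg K.m h
  simp only [K.mul_def, K.inv_def, K.one_def, add_zero, add_neg_cancel,
    Int.negOnePow_zero, Units.val_one, one_mul] at hm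
  linear_combination hm + A.m * negOnePow_sq A.n

theorem main (ψ : G₂ →* G₂) :
    Function.Bijective ψ ↔
      ∃ (a ε η : ℤ), (ε = 1 ∨ ε = -1) ∧ (η = 1 ∨ η = -1) ∧
        ψ g₁ = g₁ ^ ε ∧ ψ g₂ = g₁ ^ a * g₂ ^ η := by
  constructor
  · intro hbij
    obtain ⟨p, q, hpq⟩ := exists_form (ψ g₁)
    obtain ⟨a, b, hab⟩ := exists_form (ψ g₂)
    -- the image of the relation
    have hrel2 : ψ g₂ * ψ g₁ * (ψ g₂)⁻¹ * ψ g₁ = 1 := by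
      rw [← map_inv, ← map_mul, ← map_mul, ← map_mul, rel, map_one]
    have hK := congrArg toK hrel2
    rw [map_mul, map_mul, map_mul, map_inv, hpq, hab, toK_form, toK_form,
      map_one] at hK
    -- second coordinate: q = 0
    have hq : q = 0 := rel_n hK
    subst hq
    have hpq' : ψ g₁ = g₁ ^ p := by rw [hpq, zpow_zero, mul_one]
    -- first coordinate
    have hm := rel_m hK
    rcases Int.even_or_odd b with hb | hb
    · -- b even: forces p = 0, contradicting injectivity
      exfalso
      rw [Int.negOnePow_even b hb, Units.val_one] at hm
      have hp0 : p = 0 := by omega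
      have : ψ g₁ = 1 := by rw [hpq', hp0, zpow_zero]
      have hg1 : g₁ = 1 := hbij.1 (by rw [this, map_one])
      have := congrArg toK hg1
      rw [toK_g₁, map_one] at this
      exact one_ne_zero (congrArg K.m this)
    · -- b odd
      have hbne : b ≠ 0 := by
        have := Int.odd_iff.mp hb; omega
      -- a helper computing toK (ψ (g₁ ^ e * g₂ ^ k))
      have key : ∀ e k : ℤ, toK (ψ (g₁ ^ e * g₂ ^ k))
          = (⟨1, 0⟩ : K) ^ (p * e) * (⟨a, b⟩ : K) ^ k := by
        intro e k
        rw [map_mul ψ, map_zpow ψ, map_zpow ψ, hpq', hab, map_mul toK,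
          map_zpow toK, map_zpow toK, map_zpow toK, toK_g₁, toK_form, ← zpow_mul]
      -- surjectivity onto g₁ gives p = ±1
      obtain ⟨x, hx⟩ := hbij.2 g₁
      obtain ⟨e, k, hek⟩ := exists_form x
      have hx2 : (⟨1, 0⟩ : K) ^ (p * e) * (⟨a, b⟩ : K) ^ k = ⟨1, 0⟩ := by
        rw [← key, ← hek, hx, toK_g₁]
      have hxn := congrArg K.n hx2
      rw [K_zpow_left] at hxn
      simp only [K.mul_def, n_zpow] at hxn
      have hk0 : k = 0 := by
        rcases mul_eq_zero.mp (by linarith : k * b = 0) with h | h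
        · exact h
        · exact absurd h hbne
      rw [hk0, zpow_zero, mul_one, K_zpow_left] at hx2
      have hpe : p * e = 1 := congrArg K.m hx2
      have hpunit : p = 1 ∨ p = -1 :=
        Int.isUnit_iff.mp (IsUnit.of_mul_eq_one e hpe)
      -- surjectivity onto g₂ gives b = ±1
      obtain ⟨y, hy⟩ := hbij.2 g₂
      obtain ⟨e', k', hek'⟩ := exists_form y
      have hy2 : (⟨1, 0⟩ : K) ^ (p * e') * (⟨a, b⟩ : K) ^ k' = ⟨0, 1⟩ := by
        rw [← key, ← hek', hy, toK_g₂]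
      have hyn := congrArg K.n hy2
      rw [K_zpow_left] at hyn
      simp only [K.mul_def, n_zpow] at hyn
      have hbunit : b = 1 ∨ b = -1 :=
        Int.isUnit_iff.mp (IsUnit.of_mul_eq_one k' (by linarith [mul_comm k' b]))
      exact ⟨a, p, b, hpunit, hbunit, hpq', hab⟩
  · rintro ⟨a, ε, η, hε, hη, h1, h2⟩
    have hε2 : ε * ε = 1 := by rcases hε with rfl | rfl <;> norm_num
    have hη0 : η ≠ 0 := by rcases hη with rfl | rfl <;> norm_num
    have hε0 : ε ≠ 0 := by rcases hε with rfl | rfl <;> norm_num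
    constructor
    · -- injective
      rw [injective_iff_map_eq_one]
      intro g hg
      obtain ⟨m, n, rfl⟩ := exists_form g
      have hK : (⟨1, 0⟩ : K) ^ (ε * m) * (⟨a, η⟩ : K) ^ n = 1 := by
        have : toK (ψ (g₁ ^ m * g₂ ^ n))
            = (⟨1, 0⟩ : K) ^ (ε * m) * (⟨a, η⟩ : K) ^ n := by
          rw [map_mul ψ, map_zpow ψ, map_zpow ψ, h1, h2, map_mul toK,
            map_zpow toK, map_zpow toK, map_zpow toK, toK_g₁, toK_form, ← zpow_mul]
        rw [← this, hg, map_one]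
      have hn := congrArg K.n hK
      rw [K_zpow_left] at hn
      simp only [K.mul_def, K.one_def, n_zpow] at hn
      have hn0 : n = 0 := by
        rcases mul_eq_zero.mp (by linarith : n * η = 0) with h | h
        · exact h
        · exact absurd h hη0
      rw [hn0, zpow_zero, mul_one, K_zpow_left] at hK
      have hm0 : m = 0 := by
        have := congrArg K.m hK
        simp only [K.one_def] at this
        rcases mul_eq_zero.mp this with h | h
        · exact absurd h hε0
        · exact h
      rw [hm0, hn0, zpow_zero, zpow_zero, mul_one]
    · -- surjective
      have hgen1 : ψ (g₁ ^ ε) = g₁ := by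
        rw [map_zpow, h1, ← zpow_mul, hε2, zpow_one]
      have hswap : g₂ * g₁ ^ (-a) = g₁ ^ a * g₂ := by
        have h := swap_pow 1 (-a)
        rw [zpow_one, Int.negOnePow_one] at h
        simpa using h
      have hgen2 : ψ (g₁ ^ (-(ε * a)) * g₂ ^ η) = g₂ := by
        rw [map_mul, map_zpow, map_zpow, h1, h2, ← zpow_mul]
        have hexp : ε * -(ε * a) = -a := by
          rcases hε with rfl | rfl <;> ring
        rw [hexp]
        rcases hη with rfl | rfl
        · rw [zpow_one, zpow_one, ← mul_assoc, ← zpow_add, neg_add_cancel,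
            zpow_zero, one_mul]
        · have hinv : (g₁ ^ a * g₂ ^ (-1 : ℤ))⁻¹ = g₂ * g₁ ^ (-a) := by
            rw [mul_inv_rev]
            simp [zpow_neg]
          calc g₁ ^ (-a) * (g₁ ^ a * g₂ ^ (-1 : ℤ)) ^ (-1 : ℤ)
              = g₁ ^ (-a) * (g₂ * g₁ ^ (-a)) := by
                rw [zpow_neg_one (g₁ ^ a * g₂ ^ (-1 : ℤ)), hinv]
            _ = g₂ := by
                rw [hswap, ← mul_assoc, ← zpow_add, neg_add_cancel, zpow_zero,
                  one_mul]
      intro g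
      obtain ⟨m, n, rfl⟩ := exists_form g
      refine ⟨(g₁ ^ ε) ^ m * (g₁ ^ (-(ε * a)) * g₂ ^ η) ^ n, ?_⟩
      rw [map_mul ψ, map_zpow ψ (g₁ ^ ε) m,
        map_zpow ψ (g₁ ^ (-(ε * a)) * g₂ ^ η) n, hgen1, hgen2]

end Klein

/-- In the Klein bottle group `G₂ = ⟨g₁, g₂ ∣ g₂ g₁ = g₁⁻¹ g₂⟩`, a group
homomorphism `ψ : G₂ →* G₂` is an automorphism (i.e. bijective) if and only if
there exist `a ∈ ℤ` and `ε, η ∈ {1, -1}` with `ψ g₁ = g₁^ε` and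
`ψ g₂ = g₁^a * g₂^η`.  In particular every automorphism of `G₂` is of one of
the four forms `α_a, β_a, γ_a, δ_a`. -/
theorem klein_aut_characterization
    (ψ : PresentedGroup kleinRels →* PresentedGroup kleinRels) :
    letI G₂ := PresentedGroup kleinRels
    letI g₁ : G₂ := PresentedGroup.of 0
    letI g₂ : G₂ := PresentedGroup.of 1
    Function.Bijective ψ ↔
      ∃ (a ε η : ℤ), (ε = 1 ∨ ε = -1) ∧ (η = 1 ∨ η = -1) ∧
        ψ g₁ = g₁ ^ ε ∧ ψ g₂ = g₁ ^ a * g₂ ^ η :=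
  Klein.main ψ
end

section
/- Let G₂ = ⟨g₁, g₂ ∣ g₂g₁ = g₁^{-1}g₂⟩. An automorphism ψ ∈ Aut(G₂) is inner if and only if there exist a ∈ ℤ and ε ∈ {1, -1} such that ψ(g₁) = g₁^{ε} and ψ(g₂) = g₁^{2a} · g₂. -/
namespace KleinAux

abbrev G := PresentedGroup kleinRels

def g₁ : G := PresentedGroup.of 0
def g₂ : G := PresentedGroup.of 1

lemma rel : g₂ * g₁ * g₂⁻¹ * g₁ = 1 := by
  have h : (FreeGroup.of 1 * FreeGroup.of 0 * (FreeGroup.of 1)⁻¹ * FreeGroup.of 0 :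
      FreeGroup (Fin 2)) ∈ Subgroup.normalClosure kleinRels :=
    Subgroup.subset_normalClosure rfl
  have := (QuotientGroup.eq_one_iff
    (FreeGroup.of 1 * FreeGroup.of 0 * (FreeGroup.of 1)⁻¹ * FreeGroup.of 0)).2 h
  exact this

lemma conj₂ : g₂ * g₁ * g₂⁻¹ = g₁⁻¹ := by
  have h := rel
  rw [mul_eq_one_iff_eq_inv] at h
  exact h

lemma conj₂_zpow (n : ℤ) : g₂ * g₁ ^ n * g₂⁻¹ = g₁ ^ (-n) := by
  have : (MulAut.conj g₂) (g₁ ^ n) = ((MulAut.conj g₂) g₁) ^ n := map_zpow _ _ _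
  simp only [MulAut.conj_apply] at this
  rw [this, conj₂, inv_zpow, zpow_neg]

lemma g2_mul_zpow (n : ℤ) : g₂ * g₁ ^ n = g₁ ^ (-n) * g₂ := by
  have := conj₂_zpow n
  rw [mul_inv_eq_iff_eq_mul] at this
  exact this

lemma conj_zpow_of (h : G) {ε : ℤ} (hc : h * g₁ * h⁻¹ = g₁ ^ ε) (n : ℤ) :
    h * g₁ ^ n * h⁻¹ = g₁ ^ (ε * n) := by
  have : (MulAut.conj h) (g₁ ^ n) = ((MulAut.conj h) g₁) ^ n := map_zpow _ _ _
  simp only [MulAut.conj_apply] at this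
  rw [this, hc, ← zpow_mul]

def P (h : G) : Prop :=
  ∃ a ε : ℤ, (ε = 1 ∨ ε = -1) ∧ h * g₁ * h⁻¹ = g₁ ^ ε ∧ h * g₂ * h⁻¹ = g₁ ^ (2 * a) * g₂

lemma P_g1 : P g₁ := by
  refine ⟨1, 1, Or.inl rfl, by group, ?_⟩
  have h := g2_mul_zpow (-1)
  simp only [neg_neg] at h
  calc g₁ * g₂ * g₁⁻¹ = g₁ * (g₂ * g₁ ^ (-1 : ℤ)) := by group
    _ = g₁ * (g₁ ^ (1 : ℤ) * g₂) := by rw [h]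
    _ = g₁ ^ (2 * 1 : ℤ) * g₂ := by
          rw [show ((2 : ℤ) * 1) = 1 + 1 by ring, zpow_add, zpow_one, mul_assoc]

lemma P_g2 : P g₂ := ⟨0, -1, Or.inr rfl, by rw [conj₂, zpow_neg_one], by group⟩

lemma P_one : P 1 := ⟨0, 1, Or.inl rfl, by group, by group⟩

lemma P_mul {h k : G} (hh : P h) (hk : P k) : P (h * k) := by
  obtain ⟨a, ε, hε, h1, h2⟩ := hh
  obtain ⟨b, δ, hδ, k1, k2⟩ := hk
  refine ⟨ε * b + a, ε * δ, ?_, ?_, ?_⟩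
  · rcases hε with rfl | rfl <;> rcases hδ with rfl | rfl <;> simp
  · calc h * k * g₁ * (h * k)⁻¹ = h * (k * g₁ * k⁻¹) * h⁻¹ := by group
      _ = h * g₁ ^ δ * h⁻¹ := by rw [k1]
      _ = g₁ ^ (ε * δ) := conj_zpow_of h h1 δ
  · calc h * k * g₂ * (h * k)⁻¹ = h * (k * g₂ * k⁻¹) * h⁻¹ := by group
      _ = h * (g₁ ^ (2 * b) * g₂) * h⁻¹ := by rw [k2]
      _ = (h * g₁ ^ (2 * b) * h⁻¹) * (h * g₂ * h⁻¹) := by group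
      _ = g₁ ^ (ε * (2 * b)) * (g₁ ^ (2 * a) * g₂) := by rw [conj_zpow_of h h1, h2]
      _ = g₁ ^ (2 * (ε * b + a)) * g₂ := by rw [← mul_assoc, ← zpow_add]; ring_nf
    
lemma conj_zpow_inv (h : G) {ε : ℤ} (hε2 : ε * ε = 1) (hc : h * g₁ * h⁻¹ = g₁ ^ ε) (n : ℤ) :
    h⁻¹ * g₁ ^ n * h = g₁ ^ (ε * n) := by
  have key := conj_zpow_of h hc (ε * n)
  have e : ε * (ε * n) = n := by rw [← mul_assoc, hε2, one_mul]
  rw [e] at key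
  rw [← key]; group

lemma P_inv {h : G} (hh : P h) : P h⁻¹ := by
  obtain ⟨a, ε, hε, h1, h2⟩ := hh
  have hε2 : ε * ε = 1 := by rcases hε with rfl | rfl <;> norm_num
  refine ⟨-(ε * a), ε, hε, ?_, ?_⟩
  · have := conj_zpow_inv h hε2 h1 1
    rw [mul_one, zpow_one] at this
    rw [inv_inv]; exact this
  · calc h⁻¹ * g₂ * h⁻¹⁻¹
        = (h⁻¹ * g₁ ^ (-(2 * a)) * h) * (h⁻¹ * (g₁ ^ (2 * a) * g₂) * h) := by group
      _ = (h⁻¹ * g₁ ^ (-(2 * a)) * h) * (h⁻¹ * (h * g₂ * h⁻¹) * h) := by rw [h2]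
      _ = g₁ ^ (ε * -(2 * a)) * g₂ := by rw [conj_zpow_inv h hε2 h1]; group
      _ = g₁ ^ (2 * -(ε * a)) * g₂ := by ring_nf

lemma range_of : Set.range (PresentedGroup.of : Fin 2 → G) = {g₁, g₂} := by
  ext x
  constructor
  · rintro ⟨i, rfl⟩
    fin_cases i
    · exact Or.inl rfl
    · exact Or.inr rfl
  · rintro (rfl | rfl)
    exacts [⟨0, rfl⟩, ⟨1, rfl⟩]

lemma closure_top : Subgroup.closure ({g₁, g₂} : Set G) = ⊤ := by
  rw [← range_of]; exact PresentedGroup.closure_range_of kleinRels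

lemma P_all (h : G) : P h := by
  have : h ∈ Subgroup.closure ({g₁, g₂} : Set G) := by rw [closure_top]; trivial
  refine Subgroup.closure_induction ?_ P_one (fun _ _ _ _ => P_mul) (fun _ _ => P_inv) this
  rintro x (rfl | rfl)
  exacts [P_g1, P_g2]

lemma eq_of_agree (ψ : G ≃* G) (h : G) (e1 : ψ g₁ = h * g₁ * h⁻¹) (e2 : ψ g₂ = h * g₂ * h⁻¹)
    (x : G) : ψ x = h * x * h⁻¹ := by
  have hx : x ∈ Subgroup.closure ({g₁, g₂} : Set G) := by rw [closure_top]; trivial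
  refine Subgroup.closure_induction ?_ (by simp) ?_ ?_ hx
  · rintro y (rfl | rfl); exacts [e1, e2]
  · intro y z _ _ hy hz
    rw [map_mul, hy, hz]; group
  · intro y _ hy
    rw [map_inv, hy]; group

end KleinAux

/-- In the Klein bottle group `G₂ = ⟨g₁, g₂ ∣ g₂ g₁ = g₁⁻¹ g₂⟩`, an
automorphism `ψ` is inner if and only if there exist `a ∈ ℤ` and `ε ∈ {1, -1}`
such that `ψ g₁ = g₁^ε` and `ψ g₂ = g₁^(2a) * g₂`. -/
theorem klein_inner_characterization
    (ψ : PresentedGroup kleinRels ≃* PresentedGroup kleinRels) :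
    letI G₂ := PresentedGroup kleinRels
    letI g₁ : G₂ := PresentedGroup.of 0
    letI g₂ : G₂ := PresentedGroup.of 1
    (∃ h : G₂, ∀ x : G₂, ψ x = h * x * h⁻¹) ↔
      ∃ (a ε : ℤ), (ε = 1 ∨ ε = -1) ∧
        ψ g₁ = g₁ ^ ε ∧ ψ g₂ = g₁ ^ (2 * a) * g₂ := by
  constructor
  · rintro ⟨h, hh⟩
    obtain ⟨a, ε, hε, h1, h2⟩ := KleinAux.P_all h
    exact ⟨a, ε, hε, by rw [hh]; exact h1, by rw [hh]; exact h2⟩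
  · rintro ⟨a, ε, hε, h1, h2⟩
    replace h1 : ψ KleinAux.g₁ = KleinAux.g₁ ^ ε := h1
    replace h2 : ψ KleinAux.g₂ = KleinAux.g₁ ^ (2 * a) * KleinAux.g₂ := h2
    rcases hε with rfl | rfl
    · refine ⟨KleinAux.g₁ ^ a, KleinAux.eq_of_agree ψ _ ?_ ?_⟩
      · rw [h1, zpow_one]; group
      · rw [h2]
        have := KleinAux.g2_mul_zpow (-a)
        rw [neg_neg] at this
        calc (KleinAux.g₁ : KleinAux.G) ^ (2*a) * KleinAux.g₂
            = KleinAux.g₁ ^ a * (KleinAux.g₁ ^ a * KleinAux.g₂) := by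
              rw [← mul_assoc, ← zpow_add]; ring_nf
          _ = KleinAux.g₁ ^ a * (KleinAux.g₂ * KleinAux.g₁ ^ (-a)) := by rw [this]
          _ = KleinAux.g₁ ^ a * KleinAux.g₂ * (KleinAux.g₁ ^ a)⁻¹ := by group
    · refine ⟨KleinAux.g₁ ^ a * KleinAux.g₂, KleinAux.eq_of_agree ψ _ ?_ ?_⟩
      · rw [h1]
        calc (KleinAux.g₁ : KleinAux.G) ^ (-1 : ℤ)
            = KleinAux.g₁ ^ a * (KleinAux.g₂ * KleinAux.g₁ * KleinAux.g₂⁻¹) *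
              (KleinAux.g₁ ^ a)⁻¹ := by rw [KleinAux.conj₂]; group
          _ = KleinAux.g₁ ^ a * KleinAux.g₂ * KleinAux.g₁ * (KleinAux.g₁ ^ a * KleinAux.g₂)⁻¹ := by
              group
      · rw [h2]
        have := KleinAux.g2_mul_zpow (-a)
        rw [neg_neg] at this
        calc (KleinAux.g₁ : KleinAux.G) ^ (2*a) * KleinAux.g₂
            = KleinAux.g₁ ^ a * (KleinAux.g₁ ^ a * KleinAux.g₂) := by
              rw [← mul_assoc, ← zpow_add]; ring_nf
          _ = KleinAux.g₁ ^ a * (KleinAux.g₂ * KleinAux.g₁ ^ (-a)) := by rw [this]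
          _ = KleinAux.g₁ ^ a * KleinAux.g₂ * KleinAux.g₂ * (KleinAux.g₁ ^ a * KleinAux.g₂)⁻¹ := by
              group
end

section
/- Let G be the group with presentation ⟨g₁, g₂, g₃ ∣ g₂g₁ = g₁^{-1}g₂, g₃g₁ = g₁^{-1}g₃, g₃g₂ = g₁g₂g₃⟩ (the group G₂ ⋊_{β₁} ℤ). Then the center of G equals the subgroup generated by g₂² and g₃². -/
namespace PolyZB1

def χ (b : ℤ) : ℤ := b % 2
def ε (b : ℤ) : ℤ := 1 - 2 * (b % 2)
lemma χ01 (b : ℤ) : χ b = 0 ∨ χ b = 1 := by unfold χ; omega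
lemma χ_add (x y : ℤ) : χ (x + y) = χ x + χ y - 2 * (χ x * χ y) := by
  rcases χ01 x with h | h <;> rcases χ01 y with h' | h' <;>
    rw [h, h'] <;> unfold χ at * <;> omega
lemma ε_eq (b : ℤ) : ε b = 1 - 2 * χ b := rfl
lemma ε_add (x y : ℤ) : ε (x + y) = ε x * ε y := by
  rcases χ01 x with h | h <;> rcases χ01 y with h' | h' <;>
    simp only [ε_eq, χ_add, h, h'] <;> ring
lemma χ_neg (b : ℤ) : χ (-b) = χ b := by unfold χ; omega
lemma χ_zero : χ 0 = 0 := rfl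
lemma ε_zero : ε 0 = 1 := rfl
lemma χ_one : χ 1 = 1 := rfl
lemma ε_one : ε 1 = -1 := rfl
lemma χ_even (k : ℤ) : χ (2 * k) = 0 := by unfold χ; omega
lemma χ_odd (k : ℤ) : χ (2 * k + 1) = 1 := by unfold χ; omega
lemma ε_even (k : ℤ) : ε (2 * k) = 1 := by unfold ε; omega
lemma ε_odd (k : ℤ) : ε (2 * k + 1) = -1 := by unfold ε; omega

lemma ε_sq (x : ℤ) : ε x * ε x = 1 := by
  rcases χ01 x with h | h <;> rw [ε_eq, h] <;> ring

/-- model group: ℤ³ with poly-ℤ multiplication -/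
@[ext] structure M where
  a : ℤ
  b : ℤ
  c : ℤ

instance : Mul M :=
  ⟨fun p q => ⟨p.a + ε (p.b + p.c) * q.a + ε p.b * (χ p.c * χ q.b),
    p.b + q.b, p.c + q.c⟩⟩
instance : One M := ⟨⟨0, 0, 0⟩⟩
instance : Inv M :=
  ⟨fun p => ⟨-(ε (p.b + p.c)) * (p.a + ε p.b * (χ p.c * χ p.b)), -p.b, -p.c⟩⟩

lemma M_mul (p q : M) :
    p * q = ⟨p.a + ε (p.b + p.c) * q.a + ε p.b * (χ p.c * χ q.b),
      p.b + q.b, p.c + q.c⟩ := rfl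
lemma M_one : (1 : M) = ⟨0, 0, 0⟩ := rfl
lemma M_inv (p : M) :
    p⁻¹ = ⟨-(ε (p.b + p.c)) * (p.a + ε p.b * (χ p.c * χ p.b)), -p.b, -p.c⟩ := rfl

instance : Group M where
  mul_assoc p q r := by
    obtain ⟨a, b, c⟩ := p; obtain ⟨a', b', c'⟩ := q; obtain ⟨a'', b'', c''⟩ := r
    refine M.ext ?_ ?_ ?_ <;> simp only [M_mul]
    · rcases χ01 b with h1 | h1 <;> rcases χ01 c with h2 | h2 <;>
      rcases χ01 b' with h3 | h3 <;> rcases χ01 c' with h4 | h4 <;>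
      rcases χ01 b'' with h5 | h5 <;>
      simp only [ε_eq, χ_add, h1, h2, h3, h4, h5] <;> ring
    · ring
    · ring
  one_mul p := by
    refine M.ext ?_ ?_ ?_ <;>
      simp [M_mul, M_one, ε_zero, χ_zero]
  mul_one p := by
    refine M.ext ?_ ?_ ?_ <;>
      simp [M_mul, M_one, ε_zero, χ_zero]
  inv_mul_cancel p := by
    obtain ⟨a, b, c⟩ := p
    refine M.ext ?_ ?_ ?_ <;> simp only [M_mul, M_inv, M_one] <;> [skip; ring; ring]
    rcases χ01 b with h1 | h1 <;> rcases χ01 c with h2 | h2 <;>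
      simp only [ε_eq, χ_add, χ_neg, h1, h2] <;> ring

lemma XMpow (a : ℤ) : (⟨1, 0, 0⟩ : M) ^ a = ⟨a, 0, 0⟩ := by
  induction a using Int.induction_on with
  | zero => rw [zpow_zero, M_one]
  | succ n ih =>
      rw [zpow_add_one, ih, M_mul]
      refine M.ext ?_ ?_ ?_ <;> simp [χ_zero, ε_zero] <;> push_cast <;> ring
  | pred n ih =>
      rw [zpow_sub_one, ih, M_inv, M_mul]
      refine M.ext ?_ ?_ ?_ <;> simp [χ_zero, ε_zero] <;> push_cast <;> ring

lemma YMpow (b : ℤ) : (⟨0, 1, 0⟩ : M) ^ b = ⟨0, b, 0⟩ := by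
  induction b using Int.induction_on with
  | zero => rw [zpow_zero, M_one]
  | succ n ih =>
      rw [zpow_add_one, ih, M_mul]
      refine M.ext ?_ ?_ ?_ <;> simp [χ_zero, ε_zero] <;> push_cast <;> ring
  | pred n ih =>
      rw [zpow_sub_one, ih, M_inv, M_mul]
      refine M.ext ?_ ?_ ?_ <;> simp [χ_zero, ε_zero, χ_neg, χ_one] <;> push_cast <;> ring

lemma ZMpow (c : ℤ) : (⟨0, 0, 1⟩ : M) ^ c = ⟨0, 0, c⟩ := by
  induction c using Int.induction_on with
  | zero => rw [zpow_zero, M_one]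
  | succ n ih =>
      rw [zpow_add_one, ih, M_mul]
      refine M.ext ?_ ?_ ?_ <;> simp [χ_zero, ε_zero] <;> push_cast <;> ring
  | pred n ih =>
      rw [zpow_sub_one, ih, M_inv, M_mul]
      refine M.ext ?_ ?_ ?_ <;> simp [χ_zero, ε_zero, χ_neg, χ_one] <;> push_cast <;> ring

end PolyZB1

/-- The relators `g₂g₁g₂⁻¹g₁`, `g₃g₁g₃⁻¹g₁`, `g₃g₂g₃⁻¹g₂⁻¹g₁⁻¹` presenting the
group `⟨g₁, g₂, g₃ ∣ g₂g₁ = g₁⁻¹g₂, g₃g₁ = g₁⁻¹g₃, g₃g₂ = g₁g₂g₃⟩`. -/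
def polyZRelsB1 : Set (FreeGroup (Fin 3)) :=
  {FreeGroup.of 1 * FreeGroup.of 0 * (FreeGroup.of 1)⁻¹ * FreeGroup.of 0,
   FreeGroup.of 2 * FreeGroup.of 0 * (FreeGroup.of 2)⁻¹ * FreeGroup.of 0,
   FreeGroup.of 2 * FreeGroup.of 1 * (FreeGroup.of 2)⁻¹ * (FreeGroup.of 1)⁻¹ * (FreeGroup.of 0)⁻¹}

namespace PolyZB1

abbrev G := PresentedGroup polyZRelsB1

noncomputable def X : G := PresentedGroup.of 0
noncomputable def Y : G := PresentedGroup.of 1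
noncomputable def Z : G := PresentedGroup.of 2

lemma rel_one : ∀ r ∈ polyZRelsB1, PresentedGroup.mk polyZRelsB1 r = 1 := fun r hr =>
  (QuotientGroup.eq_one_iff r).mpr (Subgroup.subset_normalClosure hr)

lemma hyx : Y * X * Y⁻¹ = X⁻¹ := by
  have h := rel_one _ (show _ ∈ polyZRelsB1 from Or.inl rfl)
  simp only [map_mul, map_inv] at h
  change Y * X * Y⁻¹ * X = 1 at h
  exact eq_inv_of_mul_eq_one_left h

lemma hzx : Z * X * Z⁻¹ = X⁻¹ := by
  have h := rel_one _ (show _ ∈ polyZRelsB1 from Or.inr (Or.inl rfl))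
  simp only [map_mul, map_inv] at h
  change Z * X * Z⁻¹ * X = 1 at h
  exact eq_inv_of_mul_eq_one_left h

lemma hzy : Z * Y * Z⁻¹ = X * Y := by
  have h := rel_one _ (show _ ∈ polyZRelsB1 from Or.inr (Or.inr rfl))
  simp only [map_mul, map_inv] at h
  change Z * Y * Z⁻¹ * Y⁻¹ * X⁻¹ = 1 at h
  rw [mul_inv_eq_one] at h
  have h2 := congrArg (· * Y) h
  simpa [mul_assoc] using h2

lemma yx (t : ℤ) : Y * X ^ t * Y⁻¹ = X ^ (-t) := by
  rw [← conj_zpow, hyx, inv_zpow, ← zpow_neg]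

lemma zx (t : ℤ) : Z * X ^ t * Z⁻¹ = X ^ (-t) := by
  rw [← conj_zpow, hzx, inv_zpow, ← zpow_neg]

lemma yx' (t : ℤ) : Y * X ^ t = X ^ (-t) * Y := by
  have h2 := congrArg (· * Y) (yx t)
  simpa [mul_assoc] using h2

lemma zx' (t : ℤ) : Z * X ^ t = X ^ (-t) * Z := by
  have h3 := congrArg (· * Z) (zx t)
  simpa [mul_assoc] using h3

lemma y2x (t : ℤ) : Y ^ (2:ℤ) * X ^ t = X ^ t * Y ^ (2:ℤ) := by
  rw [zpow_two, mul_assoc, yx' t, ← mul_assoc, yx' (-t), neg_neg, mul_assoc]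

lemma z2x (t : ℤ) : Z ^ (2:ℤ) * X ^ t = X ^ t * Z ^ (2:ℤ) := by
  rw [zpow_two, mul_assoc, zx' t, ← mul_assoc, zx' (-t), neg_neg, mul_assoc]

lemma ypow_x (b t : ℤ) : Y ^ b * X ^ t = X ^ (ε b * t) * Y ^ b := by
  rcases Int.even_or_odd' b with ⟨k, rfl | rfl⟩
  · rw [ε_even, one_mul, zpow_mul]
    exact ((show Commute (Y ^ (2:ℤ)) (X ^ t) from y2x t).zpow_left k).eq
  · rw [ε_odd, zpow_add_one, mul_assoc, yx' t, ← mul_assoc, zpow_mul,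
      ((show Commute (Y ^ (2:ℤ)) (X ^ (-t)) from y2x (-t)).zpow_left k).eq]
    norm_num [mul_assoc]

lemma zpow_x (c t : ℤ) : Z ^ c * X ^ t = X ^ (ε c * t) * Z ^ c := by
  rcases Int.even_or_odd' c with ⟨k, rfl | rfl⟩
  · rw [ε_even, one_mul, zpow_mul]
    exact ((show Commute (Z ^ (2:ℤ)) (X ^ t) from z2x t).zpow_left k).eq
  · rw [ε_odd, zpow_add_one, mul_assoc, zx' t, ← mul_assoc, zpow_mul,
      ((show Commute (Z ^ (2:ℤ)) (X ^ (-t)) from z2x (-t)).zpow_left k).eq]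
    norm_num [mul_assoc]

lemma xy_sq : (X * Y) ^ (2:ℤ) = Y ^ (2:ℤ) := by
  have h1 : Y * X = X⁻¹ * Y := by
    have h2 := congrArg (· * Y) hyx
    simpa [mul_assoc] using h2
  rw [zpow_two, zpow_two, show X * Y * (X * Y) = X * (Y * X) * Y by simp only [mul_assoc], h1]
  simp [mul_assoc]

lemma xypow (t : ℤ) : (X * Y) ^ t = X ^ χ t * Y ^ t := by
  rcases Int.even_or_odd' t with ⟨k, rfl | rfl⟩
  · rw [χ_even, zpow_zero, one_mul, zpow_mul, xy_sq, ← zpow_mul]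
  · have h1 : Y ^ (2 * k) * X = X * Y ^ (2 * k) := by
      have := ypow_x (2 * k) 1
      rw [ε_even, one_mul, zpow_one] at this
      exact this
    rw [χ_odd, zpow_add_one, zpow_mul, xy_sq, ← zpow_mul, ← mul_assoc, h1,
      zpow_add_one, mul_assoc, zpow_one]

lemma zy (t : ℤ) : Z * Y ^ t * Z⁻¹ = X ^ χ t * Y ^ t := by
  rw [← conj_zpow, hzy, xypow]

lemma zy' (t : ℤ) : Z * Y ^ t = X ^ χ t * Y ^ t * Z := by
  have h2 := congrArg (· * Z) (zy t)
  simpa [mul_assoc] using h2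

lemma z2y (t : ℤ) : Z ^ (2:ℤ) * Y ^ t = Y ^ t * Z ^ (2:ℤ) := by
  calc Z ^ (2:ℤ) * Y ^ t = Z * (Z * Y ^ t) := by rw [zpow_two, mul_assoc]
    _ = Z * X ^ χ t * (Y ^ t * Z) := by rw [zy']; simp only [mul_assoc]
    _ = X ^ (-χ t) * Z * (Y ^ t * Z) := by rw [zx']
    _ = X ^ (-χ t) * (X ^ χ t * Y ^ t * Z) * Z := by
        rw [mul_assoc, ← mul_assoc Z, ← zy']
        simp only [mul_assoc]
    _ = Y ^ t * Z ^ (2:ℤ) := by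
        simp only [← mul_assoc, ← zpow_add, neg_add_cancel, zpow_zero, one_mul]
        rw [zpow_two, mul_assoc]

lemma zpow_y (c t : ℤ) : Z ^ c * Y ^ t = X ^ (χ c * χ t) * Y ^ t * Z ^ c := by
  rcases Int.even_or_odd' c with ⟨k, rfl | rfl⟩
  · rw [χ_even, zero_mul, zpow_zero, one_mul, zpow_mul]
    exact ((show Commute (Z ^ (2:ℤ)) (Y ^ t) from z2y t).zpow_left k).eq
  · rw [χ_odd, one_mul, zpow_add_one, mul_assoc, zy', ← mul_assoc, ← mul_assoc, zpow_mul,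
      ← mul_assoc, ((show Commute (Z ^ (2:ℤ)) (X ^ χ t) from z2x (χ t)).zpow_left k).eq,
      mul_assoc (X ^ χ t),
      ((show Commute (Z ^ (2:ℤ)) (Y ^ t) from z2y t).zpow_left k).eq]
    simp only [← mul_assoc, ← zpow_mul, ← zpow_add_one]

lemma nf_mul (a b c a' b' c' : ℤ) :
    (X ^ a * Y ^ b * Z ^ c) * (X ^ a' * Y ^ b' * Z ^ c') =
      X ^ (a + ε (b + c) * a' + ε b * (χ c * χ b')) * Y ^ (b + b') * Z ^ (c + c') := by
  have step1 : Z ^ c * (X ^ a' * Y ^ b' * Z ^ c') =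
      X ^ (ε c * a' + χ c * χ b') * (Y ^ b' * Z ^ (c + c')) := by
    rw [← mul_assoc, ← mul_assoc, zpow_x c a', mul_assoc _ (Z ^ c), zpow_y c b']
    simp only [← mul_assoc, ← zpow_add]
    simp only [mul_assoc, ← zpow_add]
  calc (X ^ a * Y ^ b * Z ^ c) * (X ^ a' * Y ^ b' * Z ^ c')
      = X ^ a * (Y ^ b * (Z ^ c * (X ^ a' * Y ^ b' * Z ^ c'))) := by
        simp only [mul_assoc]
    _ = X ^ a * (Y ^ b * (X ^ (ε c * a' + χ c * χ b') * (Y ^ b' * Z ^ (c + c')))) := by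
        rw [step1]
    _ = X ^ a * ((X ^ (ε b * (ε c * a' + χ c * χ b')) * Y ^ b) * (Y ^ b' * Z ^ (c + c'))) := by
        rw [← mul_assoc (Y ^ b), ypow_x b (ε c * a' + χ c * χ b'), mul_assoc]
    _ = X ^ (a + ε b * (ε c * a' + χ c * χ b')) * Y ^ (b + b') * Z ^ (c + c') := by
        simp only [← mul_assoc, ← zpow_add]
        simp only [mul_assoc, ← zpow_add]
    _ = X ^ (a + ε (b + c) * a' + ε b * (χ c * χ b')) * Y ^ (b + b') * Z ^ (c + c') := by
        rw [ε_add]; ring_nf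

noncomputable def fM : Fin 3 → M := ![⟨1, 0, 0⟩, ⟨0, 1, 0⟩, ⟨0, 0, 1⟩]

lemma fM_rels : ∀ r ∈ polyZRelsB1, FreeGroup.lift fM r = 1 := by
  rintro r (rfl | rfl | rfl) <;>
    simp only [map_mul, map_inv, FreeGroup.lift_apply_of, fM, Matrix.cons_val_zero,
      Matrix.cons_val_one, Matrix.head_cons, Matrix.cons_val_two, Matrix.tail_cons] <;>
    refine M.ext ?_ ?_ ?_ <;>
    simp [M_mul, M_inv, M_one, χ, ε] <;> rfl

noncomputable def φ : G →* M := PresentedGroup.toGroup fM_rels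

lemma φ_X : φ X = ⟨1, 0, 0⟩ := PresentedGroup.toGroup.of fM_rels
lemma φ_Y : φ Y = ⟨0, 1, 0⟩ := PresentedGroup.toGroup.of fM_rels
lemma φ_Z : φ Z = ⟨0, 0, 1⟩ := PresentedGroup.toGroup.of fM_rels

lemma M_nf (a b c : ℤ) : (⟨a,0,0⟩ : M) * ⟨0,b,0⟩ * ⟨0,0,c⟩ = ⟨a,b,c⟩ := by
  rw [M_mul, M_mul]
  refine M.ext ?_ ?_ ?_ <;> simp [χ_zero, ε_zero]

lemma φ_nf (a b c : ℤ) : φ (X ^ a * Y ^ b * Z ^ c) = ⟨a, b, c⟩ := by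
  rw [map_mul, map_mul, map_zpow, map_zpow, map_zpow, φ_X, φ_Y, φ_Z,
    XMpow, YMpow, ZMpow, M_mul, M_mul]
  refine M.ext ?_ ?_ ?_ <;> simp [χ_zero, ε_zero]

/-- the normal-form subgroup: everything -/
noncomputable def nfSub : Subgroup G where
  carrier := {g | ∃ a b c : ℤ, g = X ^ a * Y ^ b * Z ^ c}
  one_mem' := ⟨0, 0, 0, by simp⟩
  mul_mem' := by
    rintro g h ⟨a, b, c, rfl⟩ ⟨a', b', c', rfl⟩
    exact ⟨_, _, _, nf_mul a b c a' b' c'⟩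
  inv_mem' := by
    rintro g ⟨a, b, c, rfl⟩
    refine ⟨-(ε (b + c)) * (a + ε b * (χ c * χ b)), -b, -c, ?_⟩
    symm
    apply eq_inv_of_mul_eq_one_left
    rw [nf_mul]
    have h1 : -b + b = 0 := by ring
    have h2 : -c + c = 0 := by ring
    have h3 : -(ε (b + c)) * (a + ε b * (χ c * χ b)) + ε (-b + -c) * a +
        ε (-b) * (χ (-c) * χ b) = 0 := by
      have e1 : ε (-b + -c) = ε (b + c) := by rw [show -b + -c = -(b+c) by ring]; unfold ε; omega
      have e2 : ε (-b) = ε b := by unfold ε; omega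
      rw [e1, e2, χ_neg]
      rcases χ01 c with h | h <;> rcases χ01 b with h' | h'
      · rw [h]; ring
      · rw [h]; ring
      · rw [h']; rw [h]; ring
      · have hu : ε (b + c) = 1 := by rw [ε_eq, χ_add, h, h']; ring
        rw [hu, h, h']; ring
    rw [h1, h2, h3]
    simp

lemma mem_nfSub {g : G} : g ∈ nfSub ↔ ∃ a b c : ℤ, g = X ^ a * Y ^ b * Z ^ c := Iff.rfl

lemma nf_exists (g : G) : ∃ a b c : ℤ, g = X ^ a * Y ^ b * Z ^ c := by
  rw [← mem_nfSub]
  refine PresentedGroup.generated_by polyZRelsB1 nfSub ?_ g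
  intro j
  fin_cases j
  · exact ⟨1, 0, 0, by simp [X]⟩
  · exact ⟨0, 1, 0, by simp [Y]⟩
  · exact ⟨0, 0, 1, by simp [Z]⟩

lemma Y2_comm (g : G) : g * Y ^ (2:ℤ) = Y ^ (2:ℤ) * g := by
  have : g ∈ Subgroup.centralizer {Y ^ (2:ℤ)} := by
    refine PresentedGroup.generated_by polyZRelsB1 _ ?_ g
    intro j
    rw [Subgroup.mem_centralizer_iff]
    rintro h ⟨rfl⟩
    fin_cases j
    · show Y ^ (2:ℤ) * X = X * Y ^ (2:ℤ)
      have := y2x 1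
      rwa [zpow_one] at this
    · show Y ^ (2:ℤ) * Y = Y * Y ^ (2:ℤ)
      group
    · show Y ^ (2:ℤ) * Z = Z * Y ^ (2:ℤ)
      have := zy' 2
      rw [show χ 2 = 0 from rfl, zpow_zero, one_mul] at this
      rw [this]
  have := Subgroup.mem_centralizer_iff.mp this (Y ^ (2:ℤ)) rfl
  exact this.symm

lemma Z2_comm (g : G) : g * Z ^ (2:ℤ) = Z ^ (2:ℤ) * g := by
  have : g ∈ Subgroup.centralizer {Z ^ (2:ℤ)} := by
    refine PresentedGroup.generated_by polyZRelsB1 _ ?_ g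
    intro j
    rw [Subgroup.mem_centralizer_iff]
    rintro h ⟨rfl⟩
    fin_cases j
    · show Z ^ (2:ℤ) * X = X * Z ^ (2:ℤ)
      have := z2x 1
      rwa [zpow_one] at this
    · show Z ^ (2:ℤ) * Y = Y * Z ^ (2:ℤ)
      have := z2y 1
      rwa [zpow_one] at this
    · show Z ^ (2:ℤ) * Z = Z * Z ^ (2:ℤ)
      group
  have := Subgroup.mem_centralizer_iff.mp this (Z ^ (2:ℤ)) rfl
  exact this.symm

theorem center_eq :
    Subgroup.center (PresentedGroup polyZRelsB1) =
      Subgroup.closure {(PresentedGroup.of 1 : PresentedGroup polyZRelsB1) ^ 2,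
        (PresentedGroup.of 2 : PresentedGroup polyZRelsB1) ^ 2} := by
  apply le_antisymm
  · intro g hg
    obtain ⟨a, b, c, rfl⟩ := nf_exists g
    have hX := Subgroup.mem_center_iff.mp hg X
    have hZ := Subgroup.mem_center_iff.mp hg Z
    have mX : (⟨1,0,0⟩ : M) * ⟨a, b, c⟩ = ⟨a, b, c⟩ * ⟨1,0,0⟩ := by
      have h := congrArg φ hX
      simp only [map_mul, map_zpow, φ_X, φ_Y, φ_Z, XMpow, YMpow, ZMpow, M_nf] at h
      exact h
    have mZ : (⟨0,0,1⟩ : M) * ⟨a, b, c⟩ = ⟨a, b, c⟩ * ⟨0,0,1⟩ := by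
      have h := congrArg φ hZ
      simp only [map_mul, map_zpow, φ_X, φ_Y, φ_Z, XMpow, YMpow, ZMpow, M_nf] at h
      exact h
    rw [M_mul, M_mul, M.mk.injEq] at mX mZ
    simp only [χ_zero, ε_zero, χ_one, ε_one, add_zero, zero_add, mul_zero, zero_mul,
      mul_one, one_mul, neg_mul] at mX mZ
    have mX1 := mX.1
    have mZ1 := mZ.1
    have e1 : ε (b + c) = 1 := by linarith
    have e2 : a = 0 ∧ χ b = 0 := by
      rcases χ01 b with h | h <;> rw [h] at mZ1 <;> omega
    obtain ⟨ha, hb⟩ := e2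
    have hc : χ c = 0 := by
      have h3 : χ (b + c) = 0 := by
        rw [ε_eq] at e1; linarith
      rw [χ_add, hb] at h3
      omega
    have hbe : b = 2 * (b / 2) := by unfold χ at hb; omega
    have hce : c = 2 * (c / 2) := by unfold χ at hc; omega
    rw [ha, zpow_zero, one_mul]
    have h2Y : (PresentedGroup.of 1 : PresentedGroup polyZRelsB1) ^ 2 = Y ^ (2:ℤ) := by
      rw [zpow_two, pow_two]; rfl
    have h2Z : (PresentedGroup.of 2 : PresentedGroup polyZRelsB1) ^ 2 = Z ^ (2:ℤ) := by
      rw [zpow_two, pow_two]; rfl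
    have hY : Y ^ b = ((PresentedGroup.of 1 : PresentedGroup polyZRelsB1) ^ 2) ^ (b / 2) := by
      rw [h2Y, ← zpow_mul, ← hbe]
    have hZ2 : Z ^ c = ((PresentedGroup.of 2 : PresentedGroup polyZRelsB1) ^ 2) ^ (c / 2) := by
      rw [h2Z, ← zpow_mul, ← hce]
    rw [hY, hZ2]
    refine Subgroup.mul_mem _ (Subgroup.zpow_mem _ ?_ _) (Subgroup.zpow_mem _ ?_ _)
    · exact Subgroup.subset_closure (Set.mem_insert _ _)
    · exact Subgroup.subset_closure (Set.mem_insert_of_mem _ rfl)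
  · rw [Subgroup.closure_le]
    rintro w (rfl | rfl)
    · rw [SetLike.mem_coe, Subgroup.mem_center_iff]
      intro g
      have := Y2_comm g
      rwa [show Y ^ (2:ℤ) = (PresentedGroup.of 1 : PresentedGroup polyZRelsB1) ^ 2 by
        rw [zpow_two, pow_two]; rfl] at this
    · rw [SetLike.mem_coe, Subgroup.mem_center_iff]
      intro g
      have := Z2_comm g
      rwa [show Z ^ (2:ℤ) = (PresentedGroup.of 2 : PresentedGroup polyZRelsB1) ^ 2 by
        rw [zpow_two, pow_two]; rfl] at this

end PolyZB1

/-- Let `G = ⟨g₁, g₂, g₃ ∣ g₂g₁ = g₁⁻¹g₂, g₃g₁ = g₁⁻¹g₃, g₃g₂ = g₁g₂g₃⟩`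
(the group `G₂ ⋊_{β₁} ℤ`).  Then the center of `G` equals the subgroup
generated by `g₂²` and `g₃²`. -/
theorem polyZ_b1_center :
    Subgroup.center (PresentedGroup polyZRelsB1) =
      Subgroup.closure {(PresentedGroup.of 1 : PresentedGroup polyZRelsB1) ^ 2,
        (PresentedGroup.of 2 : PresentedGroup polyZRelsB1) ^ 2} :=
  PolyZB1.center_eq
end

section
/- In the group G₃ = ⟨g₁, g₂, g₃ ∣ g₂g₁ = g₁^{-1}g₂, g₃g₁ = g₁^{-1}g₃, g₃g₂ = g₁g₂g₃⟩, for all integers a, b one has g₃^a · g₂^b = g₁^{μ(a)·μ(b)} · g₂^b · g₃^a, where μ(x) = 0 if x is even and μ(x) = 1 if x is odd. -/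
/-- `μ x = 0` if `x` is even and `μ x = 1` if `x` is odd. -/
def μ (x : ℤ) : ℤ := if Even x then 0 else 1

lemma μ_even {x : ℤ} (h : Even x) : μ x = 0 := if_pos h
lemma μ_odd {x : ℤ} (h : ¬ Even x) : μ x = 1 := if_neg h

/-- Abstract version: the identity holds in any group whose three elements
satisfy the conjugation relations. -/
lemma polyZ_b1_swap_abstract {G : Type*} [Group G] (g₁ g₂ g₃ : G)
    (h21 : g₂ * g₁ * g₂⁻¹ = g₁⁻¹) (h31 : g₃ * g₁ * g₃⁻¹ = g₁⁻¹)
    (h32 : g₃ * g₂ * g₃⁻¹ = g₁ * g₂) (a b : ℤ) :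
    g₃ ^ a * g₂ ^ b = g₁ ^ (μ a * μ b) * g₂ ^ b * g₃ ^ a := by
  -- conjugation of powers of g₁
  have p2 : ∀ k : ℤ, g₂ * g₁ ^ k * g₂⁻¹ = g₁ ^ (-k) := fun k => by
    rw [← conj_zpow, h21, inv_zpow, zpow_neg]
  have p3 : ∀ k : ℤ, g₃ * g₁ ^ k * g₃⁻¹ = g₁ ^ (-k) := fun k => by
    rw [← conj_zpow, h31, inv_zpow, zpow_neg]
  -- g₂² commutes with g₁
  have c21 : Commute (g₂ ^ (2:ℤ)) g₁ := by
    have : g₂ * (g₂ * g₁ * g₂⁻¹) * g₂⁻¹ = g₁ := by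
      rw [h21, ← zpow_neg_one, p2 (-1)]; norm_num
    show _ * _ = _ * _
    have h2 : g₂ ^ (2:ℤ) = g₂ * g₂ := by
      rw [show (2:ℤ) = 1 + 1 by norm_num, zpow_add, zpow_one]
    rw [h2]
    calc g₂ * g₂ * g₁ = g₂ * (g₂ * g₁ * g₂⁻¹) * g₂⁻¹ * (g₂ * g₂) := by group
    _ = g₁ * (g₂ * g₂) := by rw [this]
  -- g₃² commutes with g₁
  have c31 : Commute (g₃ ^ (2:ℤ)) g₁ := by
    have : g₃ * (g₃ * g₁ * g₃⁻¹) * g₃⁻¹ = g₁ := by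
      rw [h31, ← zpow_neg_one, p3 (-1)]; norm_num
    show _ * _ = _ * _
    have h2 : g₃ ^ (2:ℤ) = g₃ * g₃ := by
      rw [show (2:ℤ) = 1 + 1 by norm_num, zpow_add, zpow_one]
    rw [h2]
    calc g₃ * g₃ * g₁ = g₃ * (g₃ * g₁ * g₃⁻¹) * g₃⁻¹ * (g₃ * g₃) := by group
    _ = g₁ * (g₃ * g₃) := by rw [this]
  -- (g₁g₂)² = g₂²
  have sq : (g₁ * g₂) ^ (2:ℤ) = g₂ ^ (2:ℤ) := by
    have h21' : g₂ * g₁ = g₁⁻¹ * g₂ := by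
      rw [← h21]; group
    have e : (g₁ * g₂) ^ (2:ℤ) = g₁ * (g₂ * g₁) * g₂ := by
      rw [show (2:ℤ) = 1 + 1 by norm_num, zpow_add, zpow_one]; group
    have e2 : g₂ ^ (2:ℤ) = g₂ * g₂ := by
      rw [show (2:ℤ) = 1 + 1 by norm_num, zpow_add, zpow_one]
    rw [e, e2, h21']; group
  -- key conjugation: g₃ (g₂^b) g₃⁻¹ = g₁^(μ b) g₂^b
  have q : ∀ b : ℤ, g₃ * g₂ ^ b * g₃⁻¹ = g₁ ^ (μ b) * g₂ ^ b := by
    intro b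
    have base : g₃ * g₂ ^ b * g₃⁻¹ = (g₁ * g₂) ^ b := by
      rw [← conj_zpow, h32]
    rcases Int.even_or_odd b with ⟨k, hk⟩ | ⟨k, hk⟩
    · have hb : b = 2 * k := by omega
      rw [base, μ_even ⟨k, by omega⟩, hb, zpow_mul, sq, ← zpow_mul, zpow_zero, one_mul]
    · have hb : b = 2 * k + 1 := by omega
      have hne : ¬ Even b := by rw [hb]; exact (Int.not_even_iff_odd.mpr) ⟨k, rfl⟩
      rw [base, μ_odd hne, zpow_one, hb, zpow_add, zpow_add, zpow_mul, zpow_mul, sq,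
        zpow_one, zpow_one]
      calc (g₂ ^ (2:ℤ)) ^ k * (g₁ * g₂)
          = ((g₂ ^ (2:ℤ)) ^ k * g₁) * g₂ := by group
        _ = (g₁ * (g₂ ^ (2:ℤ)) ^ k) * g₂ := by rw [(c21.zpow_left k).eq]
        _ = g₁ * ((g₂ ^ (2:ℤ)) ^ k * g₂) := by group
  -- g₃² commutes with g₂^b
  have c32 : ∀ b : ℤ, Commute (g₃ ^ (2:ℤ)) (g₂ ^ b) := by
    intro b
    have h2 : g₃ ^ (2:ℤ) = g₃ * g₃ := by
      rw [show (2:ℤ) = 1 + 1 by norm_num, zpow_add, zpow_one]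
    have q' : g₃ * g₂ ^ b = g₁ ^ (μ b) * g₂ ^ b * g₃ := by
      rw [← q b]; group
    show _ * _ = _ * _
    rw [h2]
    calc g₃ * g₃ * g₂ ^ b = g₃ * (g₃ * g₂ ^ b) := by group
      _ = g₃ * (g₁ ^ (μ b) * g₂ ^ b * g₃) := by rw [q']
      _ = (g₃ * g₁ ^ (μ b) * g₃⁻¹) * (g₃ * g₂ ^ b) * g₃ := by group
      _ = g₁ ^ (-(μ b)) * (g₁ ^ (μ b) * g₂ ^ b * g₃) * g₃ := by rw [p3, q']
      _ = g₂ ^ b * (g₃ * g₃) := by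
          rw [← mul_assoc, ← mul_assoc, ← zpow_add, neg_add_cancel, zpow_zero, one_mul,
            mul_assoc]
  -- main case split on parity of a
  rcases Int.even_or_odd a with ⟨k, hk⟩ | ⟨k, hk⟩
  · have ha : a = 2 * k := by omega
    rw [μ_even ⟨k, by omega⟩, zero_mul, zpow_zero, one_mul, ha, zpow_mul]
    exact ((c32 b).zpow_left k).eq
  · have ha : a = 2 * k + 1 := by omega
    have hne : ¬ Even a := by rw [ha]; exact (Int.not_even_iff_odd.mpr) ⟨k, rfl⟩
    have q' : g₃ * g₂ ^ b = g₁ ^ (μ b) * g₂ ^ b * g₃ := by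
      rw [← q b]; group
    rw [μ_odd hne, one_mul, ha, zpow_add, zpow_one, zpow_mul]
    calc (g₃ ^ (2:ℤ)) ^ k * g₃ * g₂ ^ b
        = (g₃ ^ (2:ℤ)) ^ k * (g₃ * g₂ ^ b) := by group
      _ = (g₃ ^ (2:ℤ)) ^ k * (g₁ ^ (μ b) * g₂ ^ b * g₃) := by rw [q']
      _ = (g₃ ^ (2:ℤ)) ^ k * g₁ ^ (μ b) * g₂ ^ b * g₃ := by group
      _ = g₁ ^ (μ b) * (g₃ ^ (2:ℤ)) ^ k * g₂ ^ b * g₃ := by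
          rw [((c31.zpow_left k).zpow_right (μ b)).eq]
      _ = g₁ ^ (μ b) * ((g₃ ^ (2:ℤ)) ^ k * g₂ ^ b) * g₃ := by group
      _ = g₁ ^ (μ b) * (g₂ ^ b * (g₃ ^ (2:ℤ)) ^ k) * g₃ := by
          rw [((c32 b).zpow_left k).eq]
      _ = g₁ ^ (μ b) * g₂ ^ b * ((g₃ ^ (2:ℤ)) ^ k * g₃) := by group

/-- In `G₃ = ⟨g₁, g₂, g₃ ∣ g₂g₁ = g₁⁻¹g₂, g₃g₁ = g₁⁻¹g₃, g₃g₂ = g₁g₂g₃⟩`,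
for all integers `a, b`: `g₃^a * g₂^b = g₁^(μ(a)·μ(b)) * g₂^b * g₃^a`. -/
theorem polyZ_b1_swap (a b : ℤ) :
    letI G₃ := PresentedGroup polyZRelsB1
    letI g₁ : G₃ := PresentedGroup.of 0
    letI g₂ : G₃ := PresentedGroup.of 1
    letI g₃ : G₃ := PresentedGroup.of 2
    g₃ ^ a * g₂ ^ b = g₁ ^ (μ a * μ b) * g₂ ^ b * g₃ ^ a := by
  set G₃ := PresentedGroup polyZRelsB1
  set g₁ : G₃ := PresentedGroup.of 0 with hg1
  set g₂ : G₃ := PresentedGroup.of 1 with hg2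
  set g₃ : G₃ := PresentedGroup.of 2 with hg3
  have one_of : ∀ r ∈ polyZRelsB1, (QuotientGroup.mk r : G₃) = 1 := fun r hr =>
    (QuotientGroup.eq_one_iff r).mpr (Subgroup.subset_normalClosure hr)
  have h1 : g₂ * g₁ * g₂⁻¹ * g₁ = 1 := by
    have := one_of _ (by simp [polyZRelsB1] : (FreeGroup.of 1 * FreeGroup.of 0 *
      (FreeGroup.of 1)⁻¹ * FreeGroup.of 0 : FreeGroup (Fin 3)) ∈ polyZRelsB1)
    exact this
  have h2 : g₃ * g₁ * g₃⁻¹ * g₁ = 1 := by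
    have := one_of _ (by simp [polyZRelsB1] : (FreeGroup.of 2 * FreeGroup.of 0 *
      (FreeGroup.of 2)⁻¹ * FreeGroup.of 0 : FreeGroup (Fin 3)) ∈ polyZRelsB1)
    exact this
  have h3 : g₃ * g₂ * g₃⁻¹ * g₂⁻¹ * g₁⁻¹ = 1 := by
    have := one_of _ (by simp [polyZRelsB1] : (FreeGroup.of 2 * FreeGroup.of 1 *
      (FreeGroup.of 2)⁻¹ * (FreeGroup.of 1)⁻¹ * (FreeGroup.of 0)⁻¹ : FreeGroup (Fin 3))
      ∈ polyZRelsB1)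
    exact this
  refine polyZ_b1_swap_abstract g₁ g₂ g₃ ?_ ?_ ?_ a b
  · have := mul_eq_one_iff_eq_inv.mp h1; rw [this]
  · have := mul_eq_one_iff_eq_inv.mp h2; rw [this]
  · have : g₃ * g₂ * g₃⁻¹ * g₂⁻¹ = g₁ := by
      have := mul_eq_one_iff_eq_inv.mp h3; rw [this, inv_inv]
    calc g₃ * g₂ * g₃⁻¹ = (g₃ * g₂ * g₃⁻¹ * g₂⁻¹) * g₂ := by group
      _ = g₁ * g₂ := by rw [this]
end

section
/- In the group G₃ = ⟨g₁, g₂, g₃ ∣ g₂g₁ = g₁^{-1}g₂, g₃g₁ = g₁^{-1}g₃, g₃g₂ = g₁g₂g₃⟩, for all integers a, b, c, m: if b and c are both even then (g₁^a g₂^b g₃^c)^m = g₁^{ma} g₂^{mb} g₃^{mc}; if b and c are both odd then (g₁^a g₂^b g₃^c)^m = g₁^{ma − ⌊m/2⌋} g₂^{mb} g₃^{mc} (with ⌊m/2⌋ the floor of m/2 in ℤ); and if b + c is odd then (g₁^a g₂^b g₃^c)^m = g₁^{μ(m)·a} g₂^{mb} g₃^{mc}, where μ(m) = 0 if m is even and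 μ(m) = 1 if m is odd. -/
namespace PolyZB1Aux

abbrev G₃ := PresentedGroup polyZRelsB1

def g₁ : G₃ := PresentedGroup.of 0
def g₂ : G₃ := PresentedGroup.of 1
def g₃ : G₃ := PresentedGroup.of 2

lemma rel_one {r : FreeGroup (Fin 3)} (hr : r ∈ polyZRelsB1) :
    (QuotientGroup.mk r : G₃) = 1 := by
  rw [QuotientGroup.eq_one_iff]
  exact Subgroup.subset_normalClosure hr

lemma rel1 : g₂ * g₁ * g₂⁻¹ * g₁ = 1 := by
  have h := rel_one (show _ ∈ polyZRelsB1 from Or.inl rfl)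
  exact h

lemma rel2 : g₃ * g₁ * g₃⁻¹ * g₁ = 1 := by
  have h := rel_one (show _ ∈ polyZRelsB1 from Or.inr (Or.inl rfl))
  exact h

lemma rel3 : g₃ * g₂ * g₃⁻¹ * g₂⁻¹ * g₁⁻¹ = 1 := by
  have h := rel_one (show _ ∈ polyZRelsB1 from Or.inr (Or.inr rfl))
  exact h

lemma conj21 : g₂ * g₁ * g₂⁻¹ = g₁⁻¹ := eq_inv_of_mul_eq_one_left rel1
lemma conj31 : g₃ * g₁ * g₃⁻¹ = g₁⁻¹ := eq_inv_of_mul_eq_one_left rel2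

lemma s32 : g₃ * g₂ = g₁ * g₂ * g₃ := by
  have h1 : g₃ * g₂ * g₃⁻¹ * g₂⁻¹ = g₁ := mul_inv_eq_one.mp rel3
  have h2 : g₃ * g₂ * g₃⁻¹ = g₁ * g₂ := mul_inv_eq_iff_eq_mul.mp h1
  exact mul_inv_eq_iff_eq_mul.mp h2

/-- `g₂ g₁^a = g₁^{-a} g₂`. -/
lemma s21z (a : ℤ) : g₂ * g₁ ^ a = g₁ ^ (-a) * g₂ := by
  have h : g₂ * g₁ ^ a * g₂⁻¹ = g₁ ^ (-a) := by
    rw [← conj_zpow, conj21, ← zpow_neg_one, ← zpow_mul]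
    ring_nf
  rw [← h]; group

lemma s31z (a : ℤ) : g₃ * g₁ ^ a = g₁ ^ (-a) * g₃ := by
  have h : g₃ * g₁ ^ a * g₃⁻¹ = g₁ ^ (-a) := by
    rw [← conj_zpow, conj31, ← zpow_neg_one, ← zpow_mul]
    ring_nf
  rw [← h]; group

lemma s21 : g₂ * g₁ = g₁⁻¹ * g₂ := by have := s21z 1; simpa using this
lemma s21' : g₂ * g₁⁻¹ = g₁ * g₂ := by have := s21z (-1); simpa using this
lemma s31 : g₃ * g₁ = g₁⁻¹ * g₃ := by have := s31z 1; simpa using this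
lemma s31' : g₃ * g₁⁻¹ = g₁ * g₃ := by have := s31z (-1); simpa using this

lemma comm_sq21 : Commute (g₂ ^ (2 : ℕ)) g₁ := by
  show g₂ ^ 2 * g₁ = g₁ * g₂ ^ 2
  rw [sq, mul_assoc, s21, ← mul_assoc, s21', mul_assoc]

lemma comm_sq31 : Commute (g₃ ^ (2 : ℕ)) g₁ := by
  show g₃ ^ 2 * g₁ = g₁ * g₃ ^ 2
  rw [sq, mul_assoc, s31, ← mul_assoc, s31', mul_assoc]

lemma comm_sq23 : Commute (g₂ ^ (2 : ℕ)) g₃ := by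
  have : g₃ * g₂ ^ 2 = g₂ ^ 2 * g₃ := by
    rw [sq, ← mul_assoc, s32, mul_assoc, mul_assoc, s32]
    rw [show g₁ * (g₂ * (g₁ * g₂ * g₃)) = g₁ * (g₂ * g₁) * (g₂ * g₃) by group, s21]
    group
  exact this.symm

lemma comm_sq32 : Commute (g₃ ^ (2 : ℕ)) g₂ := by
  show g₃ ^ 2 * g₂ = g₂ * g₃ ^ 2
  rw [sq, mul_assoc, s32, ← mul_assoc, ← mul_assoc, s31]
  rw [show g₁⁻¹ * g₃ * g₂ * g₃ = g₁⁻¹ * (g₃ * g₂) * g₃ by group, s32]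
  group

/-- From `Commute (x^2) y`, even `b` gives `Commute (x^b) (y^a)` for zpow. -/
lemma comm_even {x y : G₃} (h : Commute (x ^ (2 : ℕ)) y) {b : ℤ} (hb : Even b) (a : ℤ) :
    Commute (x ^ b) (y ^ a) := by
  obtain ⟨k, rfl⟩ := hb
  have hx : x ^ (k + k) = (x ^ (2 : ℕ)) ^ k := by
    rw [← zpow_natCast x 2, ← zpow_mul]
    norm_num [two_mul]
  rw [hx]
  exact (h.zpow_left k).zpow_right a

/-- `g₂^b g₁^a = g₁^{-a} g₂^b` for odd `b`. -/
lemma s21_odd {b : ℤ} (hb : Odd b) (a : ℤ) : g₂ ^ b * g₁ ^ a = g₁ ^ (-a) * g₂ ^ b := by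
  obtain ⟨k, rfl⟩ := hb
  have he : Even ((2 : ℤ) * k) := ⟨k, two_mul k⟩
  rw [show g₂ ^ (2 * k + 1) = g₂ ^ (2 * k) * g₂ from zpow_add_one g₂ (2 * k),
    mul_assoc, s21z a, ← mul_assoc, (comm_even comm_sq21 he (-a)).eq, mul_assoc]

lemma s31_odd {c : ℤ} (hc : Odd c) (a : ℤ) : g₃ ^ c * g₁ ^ a = g₁ ^ (-a) * g₃ ^ c := by
  obtain ⟨k, rfl⟩ := hc
  have he : Even ((2 : ℤ) * k) := ⟨k, two_mul k⟩
  rw [show g₃ ^ (2 * k + 1) = g₃ ^ (2 * k) * g₃ from zpow_add_one g₃ (2 * k),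
    mul_assoc, s31z a, ← mul_assoc, (comm_even comm_sq31 he (-a)).eq, mul_assoc]

/-- `g₃^c g₂^b = g₁ g₂^b g₃^c` for odd `b`, `c`. -/
lemma s32_oddodd {b c : ℤ} (hb : Odd b) (hc : Odd c) :
    g₃ ^ c * g₂ ^ b = g₁ * g₂ ^ b * g₃ ^ c := by
  obtain ⟨t, ht⟩ := hb
  obtain ⟨s, hs⟩ := hc
  have heb : Even ((2 : ℤ) * t) := ⟨t, two_mul t⟩
  have hec : Even ((2 : ℤ) * s) := ⟨s, two_mul s⟩
  subst ht hs
  have key : g₃ * g₂ ^ (2 * t + 1) = g₁ * g₂ ^ (2 * t + 1) * g₃ := by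
    rw [show g₂ ^ (2 * t + 1) = g₂ * g₂ ^ (2 * t) by
      rw [← zpow_one_add]; ring_nf]
    rw [← mul_assoc, s32]
    have h23 := (comm_even comm_sq23 heb 1).eq
    simp only [zpow_one] at h23
    calc g₁ * g₂ * g₃ * g₂ ^ (2 * t)
        = g₁ * g₂ * (g₃ * g₂ ^ (2 * t)) := by group
      _ = g₁ * g₂ * (g₂ ^ (2 * t) * g₃) := by rw [← h23]
      _ = g₁ * (g₂ * g₂ ^ (2 * t)) * g₃ := by group
  have c1 : g₃ ^ ((2 : ℤ) * s) * g₁ ^ (1 : ℤ) = g₁ ^ (1 : ℤ) * g₃ ^ ((2 : ℤ) * s) :=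
    (comm_even comm_sq31 hec 1).eq
  simp only [zpow_one] at c1
  have c2 : g₃ ^ ((2 : ℤ) * s) * g₂ ^ (2 * t + 1) = g₂ ^ (2 * t + 1) * g₃ ^ ((2 : ℤ) * s) :=
    (comm_even comm_sq32 hec (2 * t + 1)).eq
  calc g₃ ^ (2 * s + 1) * g₂ ^ (2 * t + 1)
      = g₃ ^ (2 * s) * (g₃ * g₂ ^ (2 * t + 1)) := by
        rw [show g₃ ^ (2 * s + 1) = g₃ ^ (2 * s) * g₃ from zpow_add_one g₃ (2 * s)]
        group
    _ = g₃ ^ (2 * s) * (g₁ * g₂ ^ (2 * t + 1) * g₃) := by rw [key]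
    _ = (g₃ ^ (2 * s) * g₁) * g₂ ^ (2 * t + 1) * g₃ := by group
    _ = g₁ * (g₃ ^ (2 * s) * g₂ ^ (2 * t + 1)) * g₃ := by rw [c1]; group
    _ = g₁ * (g₂ ^ (2 * t + 1) * g₃ ^ (2 * s)) * g₃ := by rw [c2]
    _ = g₁ * g₂ ^ (2 * t + 1) * g₃ ^ (2 * s + 1) := by
        rw [show g₃ ^ (2 * s + 1) = g₃ ^ (2 * s) * g₃ from zpow_add_one g₃ (2 * s)]
        group

/-- Case 1: both even. -/
lemma case_even (a : ℤ) {b c : ℤ} (m : ℤ) (hb : Even b) (hc : Even c) :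
    (g₁ ^ a * g₂ ^ b * g₃ ^ c) ^ m = g₁ ^ (m * a) * g₂ ^ (m * b) * g₃ ^ (m * c) := by
  have h21 : Commute (g₂ ^ b) (g₁ ^ a) := comm_even comm_sq21 hb a
  have h31 : Commute (g₃ ^ c) (g₁ ^ a) := comm_even comm_sq31 hc a
  have h23 : Commute (g₂ ^ b) (g₃ ^ c) := comm_even comm_sq23 hb c
  have e1 : (g₁ ^ a * g₂ ^ b * g₃ ^ c) ^ m = (g₁ ^ a * g₂ ^ b) ^ m * (g₃ ^ c) ^ m :=
    Commute.mul_zpow (Commute.mul_left h31.symm h23) m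
  have e2 : (g₁ ^ a * g₂ ^ b) ^ m = (g₁ ^ a) ^ m * (g₂ ^ b) ^ m :=
    Commute.mul_zpow h21.symm m
  rw [e1, e2, ← zpow_mul, ← zpow_mul, ← zpow_mul, mul_comm a m, mul_comm b m, mul_comm c m]

/-- Pushing a generic word past an even-exponent tail. -/
lemma tail_mul (a b c : ℤ) {B C : ℤ} (hB : Even B) (hC : Even C) :
    (g₂ ^ B * g₃ ^ C) * (g₁ ^ a * g₂ ^ b * g₃ ^ c)
      = g₁ ^ a * g₂ ^ (B + b) * g₃ ^ (C + c) := by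
  have t1 : g₃ ^ C * g₁ ^ a = g₁ ^ a * g₃ ^ C := (comm_even comm_sq31 hC a).eq
  have t2 : g₂ ^ B * g₁ ^ a = g₁ ^ a * g₂ ^ B := (comm_even comm_sq21 hB a).eq
  have t3 : g₃ ^ C * g₂ ^ b = g₂ ^ b * g₃ ^ C := (comm_even comm_sq32 hC b).eq
  calc (g₂ ^ B * g₃ ^ C) * (g₁ ^ a * g₂ ^ b * g₃ ^ c)
      = g₂ ^ B * (g₃ ^ C * g₁ ^ a) * g₂ ^ b * g₃ ^ c := by group
    _ = (g₂ ^ B * g₁ ^ a) * (g₃ ^ C * g₂ ^ b) * g₃ ^ c := by rw [t1]; group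
    _ = (g₁ ^ a * g₂ ^ B) * (g₂ ^ b * g₃ ^ C) * g₃ ^ c := by rw [t2, t3]
    _ = g₁ ^ a * (g₂ ^ B * g₂ ^ b) * (g₃ ^ C * g₃ ^ c) := by group
    _ = g₁ ^ a * g₂ ^ (B + b) * g₃ ^ (C + c) := by rw [← zpow_add, ← zpow_add]

/-- Case 3: b + c odd. -/
lemma case_mixed (a : ℤ) {b c : ℤ} (m : ℤ) (h : Odd (b + c)) :
    (g₁ ^ a * g₂ ^ b * g₃ ^ c) ^ m = g₁ ^ (μ m * a) * g₂ ^ (m * b) * g₃ ^ (m * c) := by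
  set w := g₁ ^ a * g₂ ^ b * g₃ ^ c with hw
  have hsq : w ^ (2 : ℤ) = g₂ ^ (2 * b) * g₃ ^ (2 * c) := by
    have hw2 : w ^ (2 : ℤ) = w * w := by
      rw [show (2 : ℤ) = 1 + 1 by norm_num, zpow_add, zpow_one]
    rw [hw2, hw]
    obtain ⟨n, hn⟩ := h
    rcases Int.even_or_odd b with hb | hb
    · obtain ⟨t, ht⟩ := hb
      have hc : Odd c := ⟨n - t, by omega⟩
      have t1 : g₃ ^ c * g₁ ^ a = g₁ ^ (-a) * g₃ ^ c := s31_odd hc a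
      have t2 : g₂ ^ b * g₁ ^ (-a) = g₁ ^ (-a) * g₂ ^ b :=
        (comm_even comm_sq21 ⟨t, ht⟩ (-a)).eq
      have t3 : g₃ ^ c * g₂ ^ b = g₂ ^ b * g₃ ^ c := (comm_even comm_sq23 ⟨t, ht⟩ c).symm.eq
      calc g₁ ^ a * g₂ ^ b * g₃ ^ c * (g₁ ^ a * g₂ ^ b * g₃ ^ c)
          = g₁ ^ a * g₂ ^ b * (g₃ ^ c * g₁ ^ a) * g₂ ^ b * g₃ ^ c := by group
        _ = g₁ ^ a * (g₂ ^ b * g₁ ^ (-a)) * (g₃ ^ c * g₂ ^ b) * g₃ ^ c := by rw [t1]; group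
        _ = g₁ ^ a * (g₁ ^ (-a) * g₂ ^ b) * (g₂ ^ b * g₃ ^ c) * g₃ ^ c := by rw [t2, t3]
        _ = (g₁ ^ a * g₁ ^ (-a)) * (g₂ ^ b * g₂ ^ b) * (g₃ ^ c * g₃ ^ c) := by group
        _ = g₂ ^ (2 * b) * g₃ ^ (2 * c) := by
            rw [← zpow_add, ← zpow_add, ← zpow_add]
            norm_num [two_mul]
    · obtain ⟨t, ht⟩ := hb
      have hc : Even c := ⟨n - t, by omega⟩
      have t1 : g₃ ^ c * g₁ ^ a = g₁ ^ a * g₃ ^ c := (comm_even comm_sq31 hc a).eq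
      have t2 : g₂ ^ b * g₁ ^ a = g₁ ^ (-a) * g₂ ^ b := s21_odd ⟨t, ht⟩ a
      have t3 : g₃ ^ c * g₂ ^ b = g₂ ^ b * g₃ ^ c := (comm_even comm_sq32 hc b).eq
      calc g₁ ^ a * g₂ ^ b * g₃ ^ c * (g₁ ^ a * g₂ ^ b * g₃ ^ c)
          = g₁ ^ a * g₂ ^ b * (g₃ ^ c * g₁ ^ a) * g₂ ^ b * g₃ ^ c := by group
        _ = g₁ ^ a * (g₂ ^ b * g₁ ^ a) * (g₃ ^ c * g₂ ^ b) * g₃ ^ c := by rw [t1]; group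
        _ = g₁ ^ a * (g₁ ^ (-a) * g₂ ^ b) * (g₂ ^ b * g₃ ^ c) * g₃ ^ c := by rw [t2, t3]
        _ = (g₁ ^ a * g₁ ^ (-a)) * (g₂ ^ b * g₂ ^ b) * (g₃ ^ c * g₃ ^ c) := by group
        _ = g₂ ^ (2 * b) * g₃ ^ (2 * c) := by
            rw [← zpow_add, ← zpow_add, ← zpow_add]
            norm_num [two_mul]
  have hpow : ∀ k : ℤ, (w ^ (2 : ℤ)) ^ k = g₂ ^ (2 * k * b) * g₃ ^ (2 * k * c) := by
    intro k
    rw [hsq]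
    have h0 := case_even 0 (b := 2 * b) (c := 2 * c) k ⟨b, two_mul b⟩ ⟨c, two_mul c⟩
    simp only [zpow_zero, one_mul, mul_zero] at h0
    rw [h0, show k * (2 * b) = 2 * k * b by ring, show k * (2 * c) = 2 * k * c by ring]
  rcases Int.even_or_odd m with hm | hm
  · obtain ⟨k, rfl⟩ := hm
    have hμ : μ (k + k) = 0 := by
      have : Even (k + k) := ⟨k, rfl⟩
      simp [μ, this]
    have hwk : w ^ (k + k) = (w ^ (2 : ℤ)) ^ k := by
      rw [← zpow_mul]; ring_nf
    rw [hwk, hpow k, hμ, zero_mul, zpow_zero, one_mul,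
      show (k + k) * b = 2 * k * b by ring, show (k + k) * c = 2 * k * c by ring]
  · obtain ⟨k, rfl⟩ := hm
    have hμ : μ (2 * k + 1) = 1 := by
      have : ¬ Even (2 * k + 1) := by
        rw [Int.even_iff]; omega
      simp [μ, this]
    have hwk : w ^ (2 * k + 1) = (w ^ (2 : ℤ)) ^ k * w := by
      rw [← zpow_mul, ← zpow_add_one]
    rw [hwk, hpow k, hw, tail_mul a b c ⟨k * b, by ring⟩ ⟨k * c, by ring⟩, hμ, one_mul,
      show 2 * k * b + b = (2 * k + 1) * b by ring,
      show 2 * k * c + c = (2 * k + 1) * c by ring]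

/-- Case 2: both odd. -/
lemma case_odd (a : ℤ) {b c : ℤ} (m : ℤ) (hb : Odd b) (hc : Odd c) :
    (g₁ ^ a * g₂ ^ b * g₃ ^ c) ^ m
      = g₁ ^ (m * a - Int.fdiv m 2) * g₂ ^ (m * b) * g₃ ^ (m * c) := by
  set w := g₁ ^ a * g₂ ^ b * g₃ ^ c with hw
  have hsq : w ^ (2 : ℤ) = g₁ ^ (2 * a - 1) * g₂ ^ (2 * b) * g₃ ^ (2 * c) := by
    have hw2 : w ^ (2 : ℤ) = w * w := by
      rw [show (2 : ℤ) = 1 + 1 by norm_num, zpow_add, zpow_one]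
    rw [hw2, hw]
    have t1 : g₃ ^ c * g₁ ^ a = g₁ ^ (-a) * g₃ ^ c := s31_odd hc a
    have t2 : g₂ ^ b * g₁ ^ (-a) = g₁ ^ a * g₂ ^ b := by
      have := s21_odd hb (-a); rwa [neg_neg] at this
    have t3 : g₃ ^ c * g₂ ^ b = g₁ * g₂ ^ b * g₃ ^ c := s32_oddodd hb hc
    have t4 : g₂ ^ b * g₁ = g₁⁻¹ * g₂ ^ b := by
      have := s21_odd hb 1; simpa using this
    calc g₁ ^ a * g₂ ^ b * g₃ ^ c * (g₁ ^ a * g₂ ^ b * g₃ ^ c)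
        = g₁ ^ a * g₂ ^ b * (g₃ ^ c * g₁ ^ a) * g₂ ^ b * g₃ ^ c := by group
      _ = g₁ ^ a * (g₂ ^ b * g₁ ^ (-a)) * (g₃ ^ c * g₂ ^ b) * g₃ ^ c := by rw [t1]; group
      _ = g₁ ^ a * (g₁ ^ a * g₂ ^ b) * (g₁ * g₂ ^ b * g₃ ^ c) * g₃ ^ c := by rw [t2, t3]
      _ = g₁ ^ a * g₁ ^ a * (g₂ ^ b * g₁) * g₂ ^ b * (g₃ ^ c * g₃ ^ c) := by group
      _ = g₁ ^ a * g₁ ^ a * (g₁⁻¹ * g₂ ^ b) * g₂ ^ b * (g₃ ^ c * g₃ ^ c) := by rw [t4]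
      _ = (g₁ ^ a * g₁ ^ a * g₁ ^ (-1 : ℤ)) * (g₂ ^ b * g₂ ^ b) * (g₃ ^ c * g₃ ^ c) := by
          rw [zpow_neg_one]; group
      _ = g₁ ^ (2 * a - 1) * g₂ ^ (2 * b) * g₃ ^ (2 * c) := by
          rw [← zpow_add, ← zpow_add, ← zpow_add, ← zpow_add]
          ring_nf
  have hpow : ∀ k : ℤ, (w ^ (2 : ℤ)) ^ k
      = g₁ ^ (k * (2 * a - 1)) * g₂ ^ (2 * k * b) * g₃ ^ (2 * k * c) := by
    intro k
    rw [hsq, case_even (2 * a - 1) k ⟨b, two_mul b⟩ ⟨c, two_mul c⟩,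
      show k * (2 * b) = 2 * k * b by ring, show k * (2 * c) = 2 * k * c by ring]
  rcases Int.even_or_odd m with hm | hm
  · obtain ⟨k, rfl⟩ := hm
    have hwk : w ^ (k + k) = (w ^ (2 : ℤ)) ^ k := by
      rw [← zpow_mul]; ring_nf
    have hfd : Int.fdiv (k + k) 2 = k := by
      rw [Int.fdiv_eq_ediv_of_nonneg _ (by norm_num)]; omega
    rw [hwk, hpow k, hfd,
      show k * (2 * a - 1) = (k + k) * a - k by ring,
      show 2 * k * b = (k + k) * b by ring, show 2 * k * c = (k + k) * c by ring]
  · obtain ⟨k, rfl⟩ := hm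
    have hwk : w ^ (2 * k + 1) = (w ^ (2 : ℤ)) ^ k * w := by
      rw [← zpow_mul, ← zpow_add_one]
    have hfd : Int.fdiv (2 * k + 1) 2 = k := by
      rw [Int.fdiv_eq_ediv_of_nonneg _ (by norm_num)]; omega
    have step : g₂ ^ (2 * k * b) * g₃ ^ (2 * k * c) * (g₁ ^ a * g₂ ^ b * g₃ ^ c)
        = g₁ ^ a * g₂ ^ (2 * k * b + b) * g₃ ^ (2 * k * c + c) :=
      tail_mul a b c ⟨k * b, by ring⟩ ⟨k * c, by ring⟩
    rw [hwk, hpow k, hw, mul_assoc (g₁ ^ (k * (2 * a - 1))), mul_assoc (g₁ ^ (k * (2 * a - 1))),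
      step, hfd]
    rw [show g₁ ^ (k * (2 * a - 1)) * (g₁ ^ a * g₂ ^ (2 * k * b + b) * g₃ ^ (2 * k * c + c))
        = (g₁ ^ (k * (2 * a - 1)) * g₁ ^ a) * g₂ ^ (2 * k * b + b) * g₃ ^ (2 * k * c + c) by
      group]
    rw [← zpow_add,
      show k * (2 * a - 1) + a = (2 * k + 1) * a - k by ring,
      show 2 * k * b + b = (2 * k + 1) * b by ring,
      show 2 * k * c + c = (2 * k + 1) * c by ring]

end PolyZB1Aux

/-- In `G₃ = ⟨g₁, g₂, g₃ ∣ g₂g₁ = g₁⁻¹g₂, g₃g₁ = g₁⁻¹g₃, g₃g₂ = g₁g₂g₃⟩`,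
for all integers `a, b, c, m`: if `b, c` are both even then
`(g₁^a g₂^b g₃^c)^m = g₁^(ma) g₂^(mb) g₃^(mc)`; if `b, c` are both odd then
`(g₁^a g₂^b g₃^c)^m = g₁^(ma - ⌊m/2⌋) g₂^(mb) g₃^(mc)`; and if `b + c` is odd
then `(g₁^a g₂^b g₃^c)^m = g₁^(μ(m)·a) g₂^(mb) g₃^(mc)`. -/
theorem polyZ_b1_pow (a b c m : ℤ) :
    letI G₃ := PresentedGroup polyZRelsB1
    letI g₁ : G₃ := PresentedGroup.of 0
    letI g₂ : G₃ := PresentedGroup.of 1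
    letI g₃ : G₃ := PresentedGroup.of 2
    (Even b → Even c →
      (g₁ ^ a * g₂ ^ b * g₃ ^ c) ^ m = g₁ ^ (m * a) * g₂ ^ (m * b) * g₃ ^ (m * c)) ∧
    (Odd b → Odd c →
      (g₁ ^ a * g₂ ^ b * g₃ ^ c) ^ m =
        g₁ ^ (m * a - Int.fdiv m 2) * g₂ ^ (m * b) * g₃ ^ (m * c)) ∧
    (Odd (b + c) →
      (g₁ ^ a * g₂ ^ b * g₃ ^ c) ^ m = g₁ ^ (μ m * a) * g₂ ^ (m * b) * g₃ ^ (m * c)) := by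
  refine ⟨fun hb hc => PolyZB1Aux.case_even a m hb hc,
    fun hb hc => PolyZB1Aux.case_odd a m hb hc,
    fun h => PolyZB1Aux.case_mixed a m h⟩
end

section
/- Let G₃ = ⟨g₁, g₂, g₃ ∣ g₂g₁ = g₁^{-1}g₂, g₃g₁ = g₁^{-1}g₃, g₃g₂ = g₁g₂g₃⟩. An automorphism ψ of G₃ is inner if and only if there exists a ∈ ℤ such that either ψ(g₁) = g₁, ψ(g₂) = g₁^{a} g₂, ψ(g₃) = g₁^{a} g₃, or ψ(g₁) = g₁^{-1}, ψ(g₂) = g₁^{a} g₂, ψ(g₃) = g₁^{a−1} g₃. -/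
namespace PolyZB1

abbrev G3 := PresentedGroup polyZRelsB1

def a : G3 := PresentedGroup.of 0
def b : G3 := PresentedGroup.of 1
def c : G3 := PresentedGroup.of 2

lemma conj_zpow' {G : Type*} [Group G] (h x : G) (n : ℤ) :
    h * x ^ n * h⁻¹ = (h * x * h⁻¹) ^ n := by
  have := map_zpow (MulAut.conj h) x n; simp only [MulAut.conj_apply] at this; exact this

lemma mk_rel_one {r : FreeGroup (Fin 3)} (hr : r ∈ polyZRelsB1) :
    PresentedGroup.mk polyZRelsB1 r = 1 :=
  (QuotientGroup.eq_one_iff r).mpr (Subgroup.subset_normalClosure hr)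

lemma rel_b : b * a * b⁻¹ = a⁻¹ := by
  have h := mk_rel_one (show _ ∈ polyZRelsB1 from Set.mem_insert _ _)
  simp only [map_mul, map_inv] at h
  have h' : b * a * b⁻¹ * a = 1 := h
  calc b * a * b⁻¹ = (b * a * b⁻¹ * a) * a⁻¹ := by group
    _ = a⁻¹ := by rw [h']; group

lemma rel_c : c * a * c⁻¹ = a⁻¹ := by
  have h := mk_rel_one (show _ ∈ polyZRelsB1 from
    Set.mem_insert_iff.mpr (Or.inr (Set.mem_insert _ _)))
  simp only [map_mul, map_inv] at h
  have h' : c * a * c⁻¹ * a = 1 := h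
  calc c * a * c⁻¹ = (c * a * c⁻¹ * a) * a⁻¹ := by group
    _ = a⁻¹ := by rw [h']; group

lemma rel_cb : c * b * c⁻¹ = a * b := by
  have h := mk_rel_one (show _ ∈ polyZRelsB1 from
    Set.mem_insert_iff.mpr (Or.inr (Set.mem_insert_iff.mpr (Or.inr rfl))))
  simp only [map_mul, map_inv] at h
  have h' : c * b * c⁻¹ * b⁻¹ * a⁻¹ = 1 := h
  calc c * b * c⁻¹ = (c * b * c⁻¹ * b⁻¹ * a⁻¹) * a * b := by group
    _ = a * b := by rw [h']; group

lemma comm_b (n : ℤ) : b * a ^ n * b⁻¹ = (a⁻¹) ^ n := by rw [conj_zpow', rel_b]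

lemma comm_c (n : ℤ) : c * a ^ n * c⁻¹ = (a⁻¹) ^ n := by rw [conj_zpow', rel_c]

lemma rel_bc : b * c * b⁻¹ = a⁻¹ * c := by
  have h : c * b = a * b * c := by
    calc c * b = (c * b * c⁻¹) * c := by group
      _ = a * b * c := by rw [rel_cb]
  calc b * c * b⁻¹ = a⁻¹ * ((c * b) * b⁻¹) := by
        rw [h]; group
    _ = a⁻¹ * c := by group

/-- conjugation by `h` fixes `a` and multiplies `b`, `c` by `a^n`. -/
def C1 (h : G3) (n : ℤ) : Prop :=
  h * a * h⁻¹ = a ∧ h * b * h⁻¹ = a ^ n * b ∧ h * c * h⁻¹ = a ^ n * c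

/-- conjugation by `h` inverts `a`, multiplies `b` by `a^n` and `c` by `a^(n-1)`. -/
def C2 (h : G3) (n : ℤ) : Prop :=
  h * a * h⁻¹ = a⁻¹ ∧ h * b * h⁻¹ = a ^ n * b ∧ h * c * h⁻¹ = a ^ (n - 1) * c

lemma C1.congr {h : G3} {m n : ℤ} (H : C1 h m) (e : m = n) : C1 h n := e ▸ H
lemma C2.congr {h : G3} {m n : ℤ} (H : C2 h m) (e : m = n) : C2 h n := e ▸ H

lemma C1_one : C1 1 0 := ⟨by group, by group, by group⟩

lemma C2_b : C2 b 0 := by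
  refine ⟨rel_b, by group, ?_⟩
  rw [rel_bc]; group

lemma C2_c : C2 c 1 := by
  refine ⟨rel_c, ?_, by group⟩
  rw [rel_cb]; group

lemma C1_pow (k : ℤ) : C1 (a ^ k) (2 * k) := by
  refine ⟨by group, ?_, ?_⟩
  · calc a ^ k * b * (a ^ k)⁻¹ = a ^ k * ((b * a ^ (-k) * b⁻¹) * b) := by group
      _ = a ^ k * ((a⁻¹) ^ (-k) * b) := by rw [comm_b]
      _ = a ^ (2 * k) * b := by group
  · calc a ^ k * c * (a ^ k)⁻¹ = a ^ k * ((c * a ^ (-k) * c⁻¹) * c) := by group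
      _ = a ^ k * ((a⁻¹) ^ (-k) * c) := by rw [comm_c]
      _ = a ^ (2 * k) * c := by group

lemma conj_a_zpow {h : G3} (ha : h * a * h⁻¹ = a) (m : ℤ) : h * a ^ m * h⁻¹ = a ^ m := by
  rw [conj_zpow', ha]

lemma conj_a_zpow' {h : G3} (ha : h * a * h⁻¹ = a⁻¹) (m : ℤ) :
    h * a ^ m * h⁻¹ = (a⁻¹) ^ m := by
  rw [conj_zpow', ha]

lemma C1.mul {h h' : G3} {n m : ℤ} (H : C1 h n) (H' : C1 h' m) : C1 (h * h') (n + m) := by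
  obtain ⟨ha, hb, hc⟩ := H; obtain ⟨ha', hb', hc'⟩ := H'
  refine ⟨?_, ?_, ?_⟩
  · calc h * h' * a * (h * h')⁻¹ = h * (h' * a * h'⁻¹) * h⁻¹ := by group
      _ = a := by rw [ha', ha]
  · calc h * h' * b * (h * h')⁻¹ = h * (h' * b * h'⁻¹) * h⁻¹ := by group
      _ = (h * a ^ m * h⁻¹) * (h * b * h⁻¹) := by rw [hb']; group
      _ = a ^ m * (a ^ n * b) := by rw [conj_a_zpow ha, hb]
      _ = a ^ (n + m) * b := by group
  · calc h * h' * c * (h * h')⁻¹ = h * (h' * c * h'⁻¹) * h⁻¹ := by group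
      _ = (h * a ^ m * h⁻¹) * (h * c * h⁻¹) := by rw [hc']; group
      _ = a ^ m * (a ^ n * c) := by rw [conj_a_zpow ha, hc]
      _ = a ^ (n + m) * c := by group

lemma C1.mulC2 {h h' : G3} {n m : ℤ} (H : C1 h n) (H' : C2 h' m) : C2 (h * h') (n + m) := by
  obtain ⟨ha, hb, hc⟩ := H; obtain ⟨ha', hb', hc'⟩ := H'
  refine ⟨?_, ?_, ?_⟩
  · calc h * h' * a * (h * h')⁻¹ = h * (h' * a * h'⁻¹) * h⁻¹ := by group
      _ = (h * a * h⁻¹)⁻¹ := by rw [ha']; group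
      _ = a⁻¹ := by rw [ha]
  · calc h * h' * b * (h * h')⁻¹ = h * (h' * b * h'⁻¹) * h⁻¹ := by group
      _ = (h * a ^ m * h⁻¹) * (h * b * h⁻¹) := by rw [hb']; group
      _ = a ^ m * (a ^ n * b) := by rw [conj_a_zpow ha, hb]
      _ = a ^ (n + m) * b := by group
  · calc h * h' * c * (h * h')⁻¹ = h * (h' * c * h'⁻¹) * h⁻¹ := by group
      _ = (h * a ^ (m - 1) * h⁻¹) * (h * c * h⁻¹) := by rw [hc']; group
      _ = a ^ (m - 1) * (a ^ n * c) := by rw [conj_a_zpow ha, hc]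
      _ = a ^ (n + m - 1) * c := by group

lemma C2.mulC1 {h h' : G3} {n m : ℤ} (H : C2 h n) (H' : C1 h' m) : C2 (h * h') (n - m) := by
  obtain ⟨ha, hb, hc⟩ := H; obtain ⟨ha', hb', hc'⟩ := H'
  refine ⟨?_, ?_, ?_⟩
  · calc h * h' * a * (h * h')⁻¹ = h * (h' * a * h'⁻¹) * h⁻¹ := by group
      _ = a⁻¹ := by rw [ha', ha]
  · calc h * h' * b * (h * h')⁻¹ = h * (h' * b * h'⁻¹) * h⁻¹ := by group
      _ = (h * a ^ m * h⁻¹) * (h * b * h⁻¹) := by rw [hb']; group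
      _ = (a⁻¹) ^ m * (a ^ n * b) := by rw [conj_a_zpow' ha, hb]
      _ = a ^ (n - m) * b := by group
  · calc h * h' * c * (h * h')⁻¹ = h * (h' * c * h'⁻¹) * h⁻¹ := by group
      _ = (h * a ^ m * h⁻¹) * (h * c * h⁻¹) := by rw [hc']; group
      _ = (a⁻¹) ^ m * (a ^ (n - 1) * c) := by rw [conj_a_zpow' ha, hc]
      _ = a ^ (n - m - 1) * c := by group

lemma C2.mulC2 {h h' : G3} {n m : ℤ} (H : C2 h n) (H' : C2 h' m) : C1 (h * h') (n - m) := by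
  obtain ⟨ha, hb, hc⟩ := H; obtain ⟨ha', hb', hc'⟩ := H'
  refine ⟨?_, ?_, ?_⟩
  · calc h * h' * a * (h * h')⁻¹ = h * (h' * a * h'⁻¹) * h⁻¹ := by group
      _ = (h * a * h⁻¹)⁻¹ := by rw [ha']; group
      _ = a := by rw [ha]; group
  · calc h * h' * b * (h * h')⁻¹ = h * (h' * b * h'⁻¹) * h⁻¹ := by group
      _ = (h * a ^ m * h⁻¹) * (h * b * h⁻¹) := by rw [hb']; group
      _ = (a⁻¹) ^ m * (a ^ n * b) := by rw [conj_a_zpow' ha, hb]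
      _ = a ^ (n - m) * b := by group
  · calc h * h' * c * (h * h')⁻¹ = h * (h' * c * h'⁻¹) * h⁻¹ := by group
      _ = (h * a ^ (m - 1) * h⁻¹) * (h * c * h⁻¹) := by rw [hc']; group
      _ = (a⁻¹) ^ (m - 1) * (a ^ (n - 1) * c) := by rw [conj_a_zpow' ha, hc]
      _ = a ^ (n - m) * c := by group

lemma C1.inv {h : G3} {n : ℤ} (H : C1 h n) : C1 h⁻¹ (-n) := by
  obtain ⟨ha, hb, hc⟩ := H
  have ha' : h⁻¹ * a * h⁻¹⁻¹ = a := by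
    calc h⁻¹ * a * h⁻¹⁻¹ = h⁻¹ * a * h := by group
      _ = h⁻¹ * (h * a * h⁻¹) * h := by rw [ha]
      _ = a := by group
  refine ⟨ha', ?_, ?_⟩
  · have : h⁻¹ * (a ^ n * b) * h = b := by
      calc h⁻¹ * (a ^ n * b) * h = h⁻¹ * (h * b * h⁻¹) * h := by rw [← hb]
        _ = b := by group
    calc h⁻¹ * b * h⁻¹⁻¹ = a ^ (-n) * (a ^ n * (h⁻¹ * b * h)) := by group
      _ = a ^ (-n) * ((h⁻¹ * a ^ n * h) * (h⁻¹ * b * h)) := by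
          rw [show h⁻¹ * a ^ n * h = a ^ n by
            simpa using conj_a_zpow ha' n]
      _ = a ^ (-n) * (h⁻¹ * (a ^ n * b) * h) := by group
      _ = a ^ (-n) * b := by rw [this]
  · have : h⁻¹ * (a ^ n * c) * h = c := by
      calc h⁻¹ * (a ^ n * c) * h = h⁻¹ * (h * c * h⁻¹) * h := by rw [← hc]
        _ = c := by group
    calc h⁻¹ * c * h⁻¹⁻¹ = a ^ (-n) * (a ^ n * (h⁻¹ * c * h)) := by group
      _ = a ^ (-n) * ((h⁻¹ * a ^ n * h) * (h⁻¹ * c * h)) := by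
          rw [show h⁻¹ * a ^ n * h = a ^ n by
            simpa using conj_a_zpow ha' n]
      _ = a ^ (-n) * (h⁻¹ * (a ^ n * c) * h) := by group
      _ = a ^ (-n) * c := by rw [this]

lemma C2.inv {h : G3} {n : ℤ} (H : C2 h n) : C2 h⁻¹ n := by
  obtain ⟨ha, hb, hc⟩ := H
  have ha' : h⁻¹ * a * h⁻¹⁻¹ = a⁻¹ := by
    have : h⁻¹ * a⁻¹ * h = a := by
      calc h⁻¹ * a⁻¹ * h = h⁻¹ * (h * a * h⁻¹) * h := by rw [ha]
        _ = a := by group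
    calc h⁻¹ * a * h⁻¹⁻¹ = (h⁻¹ * a⁻¹ * h)⁻¹ := by group
      _ = a⁻¹ := by rw [this]
  have hzp : ∀ m : ℤ, h⁻¹ * a ^ m * h = (a⁻¹) ^ m := by
    intro m; simpa using conj_a_zpow' ha' m
  refine ⟨ha', ?_, ?_⟩
  · have : h⁻¹ * (a ^ n * b) * h = b := by
      calc h⁻¹ * (a ^ n * b) * h = h⁻¹ * (h * b * h⁻¹) * h := by rw [← hb]
        _ = b := by group
    calc h⁻¹ * b * h⁻¹⁻¹ = a ^ n * ((a⁻¹) ^ n * (h⁻¹ * b * h)) := by group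
      _ = a ^ n * ((h⁻¹ * a ^ n * h) * (h⁻¹ * b * h)) := by rw [hzp n]
      _ = a ^ n * (h⁻¹ * (a ^ n * b) * h) := by group
      _ = a ^ n * b := by rw [this]
  · have : h⁻¹ * (a ^ (n - 1) * c) * h = c := by
      calc h⁻¹ * (a ^ (n - 1) * c) * h = h⁻¹ * (h * c * h⁻¹) * h := by rw [← hc]
        _ = c := by group
    calc h⁻¹ * c * h⁻¹⁻¹ = a ^ (n - 1) * ((a⁻¹) ^ (n - 1) * (h⁻¹ * c * h)) := by group
      _ = a ^ (n - 1) * ((h⁻¹ * a ^ (n - 1) * h) * (h⁻¹ * c * h)) := by rw [hzp (n - 1)]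
      _ = a ^ (n - 1) * (h⁻¹ * (a ^ (n - 1) * c) * h) := by group
      _ = a ^ (n - 1) * c := by rw [this]

lemma classify (h : G3) : ∃ n : ℤ, C1 h n ∨ C2 h n := by
  induction h using PresentedGroup.induction_on with
  | H z =>
    induction z using FreeGroup.induction_on with
    | C1 => exact ⟨0, Or.inl (by simpa using C1_one)⟩
    | of x =>
      fin_cases x
      · exact ⟨2, Or.inl ((C1_pow 1).congr (by ring))⟩
      · exact ⟨0, Or.inr C2_b⟩
      · exact ⟨1, Or.inr C2_c⟩
    | inv_of x ih =>
      obtain ⟨n, H | H⟩ := ih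
      · exact ⟨-n, Or.inl (by simpa using H.inv)⟩
      · exact ⟨n, Or.inr (by simpa using H.inv)⟩
    | mul x y ihx ihy =>
      obtain ⟨n, Hx | Hx⟩ := ihx <;> obtain ⟨m, Hy | Hy⟩ := ihy
      · exact ⟨n + m, Or.inl (by simpa using Hx.mul Hy)⟩
      · exact ⟨n + m, Or.inr (by simpa using Hx.mulC2 Hy)⟩
      · exact ⟨n - m, Or.inr (Hx.mulC1 Hy)⟩
      · exact ⟨n - m, Or.inl (Hx.mulC2 Hy)⟩

lemma psi_eq_conj (ψ : G3 ≃* G3) (h : G3) (e1 : ψ a = h * a * h⁻¹)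
    (e2 : ψ b = h * b * h⁻¹) (e3 : ψ c = h * c * h⁻¹) :
    ∀ x, ψ x = h * x * h⁻¹ := by
  have key : ψ.toMonoidHom = (MulAut.conj h).toMonoidHom := by
    apply PresentedGroup.ext
    intro i
    fin_cases i
    · simpa [MulAut.conj_apply, a] using e1
    · simpa [MulAut.conj_apply, b] using e2
    · simpa [MulAut.conj_apply, c] using e3
  intro x
  simpa [MulAut.conj_apply] using DFunLike.congr_fun key x

lemma conj_of_C1 (ψ : G3 ≃* G3) {n : ℤ} (h : G3) (H : C1 h n)
    (h1 : ψ a = a) (h2 : ψ b = a ^ n * b) (h3 : ψ c = a ^ n * c) :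
    ∀ x, ψ x = h * x * h⁻¹ :=
  psi_eq_conj ψ h (h1.trans H.1.symm) (h2.trans H.2.1.symm) (h3.trans H.2.2.symm)

lemma conj_of_C2 (ψ : G3 ≃* G3) {n : ℤ} (h : G3) (H : C2 h n)
    (h1 : ψ a = a⁻¹) (h2 : ψ b = a ^ n * b) (h3 : ψ c = a ^ (n - 1) * c) :
    ∀ x, ψ x = h * x * h⁻¹ :=
  psi_eq_conj ψ h (h1.trans H.1.symm) (h2.trans H.2.1.symm) (h3.trans H.2.2.symm)

end PolyZB1

/-- In `G₃ = ⟨g₁, g₂, g₃ ∣ g₂g₁ = g₁⁻¹g₂, g₃g₁ = g₁⁻¹g₃, g₃g₂ = g₁g₂g₃⟩`, an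
automorphism `ψ` is inner if and only if there exists `a ∈ ℤ` such that either
`ψ g₁ = g₁`, `ψ g₂ = g₁^a g₂`, `ψ g₃ = g₁^a g₃`, or `ψ g₁ = g₁⁻¹`,
`ψ g₂ = g₁^a g₂`, `ψ g₃ = g₁^(a-1) g₃`. -/
theorem polyZ_b1_inner_characterization
    (ψ : PresentedGroup polyZRelsB1 ≃* PresentedGroup polyZRelsB1) :
    letI G₃ := PresentedGroup polyZRelsB1
    letI g₁ : G₃ := PresentedGroup.of 0
    letI g₂ : G₃ := PresentedGroup.of 1
    letI g₃ : G₃ := PresentedGroup.of 2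
    (∃ h : G₃, ∀ x : G₃, ψ x = h * x * h⁻¹) ↔
      ∃ a : ℤ,
        (ψ g₁ = g₁ ∧ ψ g₂ = g₁ ^ a * g₂ ∧ ψ g₃ = g₁ ^ a * g₃) ∨
        (ψ g₁ = g₁⁻¹ ∧ ψ g₂ = g₁ ^ a * g₂ ∧ ψ g₃ = g₁ ^ (a - 1) * g₃) := by
  show (∃ h : PolyZB1.G3, ∀ x : PolyZB1.G3, ψ x = h * x * h⁻¹) ↔
      ∃ n : ℤ,
        (ψ PolyZB1.a = PolyZB1.a ∧ ψ PolyZB1.b = PolyZB1.a ^ n * PolyZB1.b ∧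
          ψ PolyZB1.c = PolyZB1.a ^ n * PolyZB1.c) ∨
        (ψ PolyZB1.a = PolyZB1.a⁻¹ ∧ ψ PolyZB1.b = PolyZB1.a ^ n * PolyZB1.b ∧
          ψ PolyZB1.c = PolyZB1.a ^ (n - 1) * PolyZB1.c)
  open PolyZB1 in
  constructor
  · rintro ⟨h, hψ⟩
    obtain ⟨n, H | H⟩ := PolyZB1.classify h
    · exact ⟨n, Or.inl ⟨(hψ _).trans H.1, (hψ _).trans H.2.1, (hψ _).trans H.2.2⟩⟩
    · exact ⟨n, Or.inr ⟨(hψ _).trans H.1, (hψ _).trans H.2.1, (hψ _).trans H.2.2⟩⟩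
  · rintro ⟨n, ⟨h1, h2, h3⟩ | ⟨h1, h2, h3⟩⟩
    · rcases Int.even_or_odd n with ⟨k, hk⟩ | ⟨k, hk⟩
      · exact ⟨a ^ k, conj_of_C1 ψ _ ((C1_pow k).congr (by omega)) h1 h2 h3⟩
      · exact ⟨a ^ (k + 1) * (b * c),
          conj_of_C1 ψ _ (((C1_pow (k + 1)).mul (C2_b.mulC2 C2_c)).congr (by omega)) h1 h2 h3⟩
    · rcases Int.even_or_odd n with ⟨k, hk⟩ | ⟨k, hk⟩
      · exact ⟨a ^ k * b, conj_of_C2 ψ _ (((C1_pow k).mulC2 C2_b).congr (by omega)) h1 h2 h3⟩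
      · exact ⟨a ^ k * c, conj_of_C2 ψ _ (((C1_pow k).mulC2 C2_c).congr (by omega)) h1 h2 h3⟩
end
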